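/- Let N be a tree-based network containing two N-fences of length at least 3, N_u = (a^u_1,...,a^u_{k_u}) and N_v = (a^v_1,...,a^v_{k_v}). If there exist even indices h, i, j, k with k < h and i < j such that N has a directed path from head(a^u_h) to tail(a^v_i) and a directed path from head(a^v_j) to tail(a^u_k), then every cherry cover auxiliary graph of N contains a directed cycle; in particular N is not an orchard network. -/

import Mathlib

/-- A directed graph with a distinguished root, modelling a phylogenetic network. -/
structure Net (V : Type*) where
  verts : Set V
  root : V
  arcs : Set (V × V)

namespace Net

variable {V : Type*}

/-- In-degree of a vertex. -/
noncomputable def indeg (N : Net V) (v : V) : ℕ := {a ∈ N.arcs | a.2 = v}.ncard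

/-- Out-degree of a vertex. -/
noncomputable def outdeg (N : Net V) (v : V) : ℕ := {a ∈ N.arcs | a.1 = v}.ncard

/-- A leaf: indegree 1, outdegree 0. -/
def IsLeafV (N : Net V) (v : V) : Prop := v ∈ N.verts ∧ N.indeg v = 1 ∧ N.outdeg v = 0

/-- A tree vertex: indegree 1, outdegree 2. -/
def IsTreeV (N : Net V) (v : V) : Prop := v ∈ N.verts ∧ N.indeg v = 1 ∧ N.outdeg v = 2

/-- A reticulation: indegree 2, outdegree 1. -/
def IsReticV (N : Net V) (v : V) : Prop := v ∈ N.verts ∧ N.indeg v = 2 ∧ N.outdeg v = 1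

/-- The arc relation of the network. -/
def arcRel (N : Net V) (u w : V) : Prop := (u, w) ∈ N.arcs

/-- `N` is a rooted binary phylogenetic network. -/
def IsPhylo (N : Net V) : Prop :=
  N.verts.Finite ∧ N.arcs.Finite ∧ N.root ∈ N.verts ∧
  (∀ a ∈ N.arcs, a.1 ∈ N.verts ∧ a.2 ∈ N.verts) ∧
  N.indeg N.root = 0 ∧ N.outdeg N.root = 1 ∧
  (∀ v ∈ N.verts, v = N.root ∨ N.IsTreeV v ∨ N.IsReticV v ∨ N.IsLeafV v) ∧
  (∀ v : V, ¬ Relation.TransGen N.arcRel v v)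

end Net

open Net
namespace Net

variable {V : Type*}

/-- Reducing a cherry `(x,y)`: delete the leaf `x` and suppress its parent `p`
(which has parent `gp`). -/
def CherryRed (N N' : Net V) : Prop :=
  ∃ x y p gp : V, x ≠ y ∧ N.IsLeafV x ∧ N.IsLeafV y ∧
    (p, x) ∈ N.arcs ∧ (p, y) ∈ N.arcs ∧ (gp, p) ∈ N.arcs ∧
    N'.root = N.root ∧ N'.verts = N.verts \ {x, p} ∧
    N'.arcs = (N.arcs \ {(p, x), (p, y), (gp, p)}) ∪ {(gp, y)}

/-- Reducing a reticulation cherry `(x,y)`: delete the arc from `p_y` to the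
reticulation `p_x`, and suppress the resulting degree-(1,1) vertices `p_x`, `p_y`. -/
def ReticCherryRed (N N' : Net V) : Prop :=
  ∃ x y px py qx qy : V, x ≠ y ∧ N.IsLeafV x ∧ N.IsLeafV y ∧
    (px, x) ∈ N.arcs ∧ (py, px) ∈ N.arcs ∧ (py, y) ∈ N.arcs ∧
    N.indeg px = 2 ∧ (qx, px) ∈ N.arcs ∧ qx ≠ py ∧ (qy, py) ∈ N.arcs ∧
    N'.root = N.root ∧ N'.verts = N.verts \ {px, py} ∧
    N'.arcs = (N.arcs \ {(py, px), (qx, px), (px, x), (qy, py), (py, y)}) ∪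
      {(qx, x), (qy, y)}

/-- One cherry-picking step: a cherry reduction or a reticulation cherry reduction. -/
def RedStep (N N' : Net V) : Prop := CherryRed N N' ∨ ReticCherryRed N N'

/-- A network consisting of a root and a single leaf. -/
def IsSingleLeaf (N : Net V) : Prop :=
  ∃ l : V, l ≠ N.root ∧ N.verts = {N.root, l} ∧ N.arcs = {(N.root, l)}

/-- A network is orchard if some finite sequence of cherry and reticulation
cherry reductions reduces it to a network with a single leaf. -/
def IsOrchard (N : Net V) : Prop :=
  ∃ N' : Net V, Relation.ReflTransGen RedStep N N' ∧ IsSingleLeaf N'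

end Net
/-- A cherry shape `cherry p x y` (arcs `px, py`) or a reticulation cherry shape
`retic px py x y` (arcs `p_x x, p_y p_x, p_y y`). -/
inductive Shape (V : Type*) where
  | cherry (p x y : V)
  | retic (px py x y : V)

namespace Shape

variable {V : Type*}

/-- The arcs covered by a shape. -/
def shapeArcs : Shape V → Set (V × V)
  | .cherry p x y => {(p, x), (p, y)}
  | .retic px py x y => {(px, x), (py, px), (py, y)}

/-- The endpoints of a shape. -/
def endpoints : Shape V → Set V
  | .cherry _ x y => {x, y}
  | .retic _ _ x y => {x, y}

/-- The internal vertices of a shape. -/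
def internals : Shape V → Set V
  | .cherry p _ _ => {p}
  | .retic px py _ _ => {px, py}

/-- Whether the shape is a reticulation cherry shape. -/
def IsReticShape : Shape V → Prop
  | .cherry _ _ _ => False
  | .retic _ _ _ _ => True

/-- Validity of a shape inside a network `N`: its arcs are pairwise distinct and
the distinguished vertex `p_x` of a reticulation cherry shape is a reticulation. -/
def IsValid (N : Net V) : Shape V → Prop
  | .cherry _ x y => x ≠ y
  | .retic px py x y => N.IsReticV px ∧ px ≠ py ∧ px ≠ y ∧ x ≠ y

end Shape

namespace Net

variable {V : Type*}

/-- A cherry cover of `N`: a collection of valid cherry shapes and reticulation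
cherry shapes such that every arc of `N` except the root arc is covered exactly
once, and the root arc is covered by no shape. -/
def IsCherryCover (N : Net V) (P : Set (Shape V)) : Prop :=
  (∀ S ∈ P, S.shapeArcs ⊆ N.arcs ∧ S.IsValid N) ∧
  (∀ a ∈ N.arcs, a.1 ≠ N.root → ∃! S : Shape V, S ∈ P ∧ a ∈ S.shapeArcs) ∧
  (∀ S ∈ P, ∀ a ∈ S.shapeArcs, a.1 ≠ N.root)

/-- The arc relation of the cherry covering auxiliary graph of `P`:
there is an arc from `B` to `B'` if an internal vertex of `B'` is an endpoint of `B`. -/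
def AuxRel (P : Set (Shape V)) (B B' : Shape V) : Prop :=
  B ∈ P ∧ B' ∈ P ∧ ∃ w ∈ B'.internals, w ∈ B.endpoints

/-- A cherry cover is acyclic if its auxiliary graph has no directed cycle. -/
def AuxAcyclic (P : Set (Shape V)) : Prop :=
  ∀ B : Shape V, ¬ Relation.TransGen (AuxRel P) B B

end Net
namespace Net

variable {V : Type*}

/-- A zig-zag trail in the arc set `A`: a nonempty sequence of distinct arcs of `A`
in which consecutive arcs share a tail or share a head. -/
def IsZigZag (A : Set (V × V)) (l : List (V × V)) : Prop :=
  l ≠ [] ∧ l.Nodup ∧ (∀ a ∈ l, a ∈ A) ∧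
    l.Chain' (fun a b => a.1 = b.1 ∨ a.2 = b.2)

/-- A maximal zig-zag trail: not properly contained (as an infix, up to reversal)
in any longer zig-zag trail in `A`. -/
def IsMaximalZigZag (A : Set (V × V)) (l : List (V × V)) : Prop :=
  IsZigZag A l ∧
    ∀ l' : List (V × V), IsZigZag A l' → (l <:+: l' ∨ l <:+: l'.reverse) →
      l'.length = l.length

/-- The non-root arcs of `N`. -/
def nonRootArcs (N : Net V) : Set (V × V) := {a ∈ N.arcs | a.1 ≠ N.root}

/-- A zig-zag decomposition: a partition of all non-root arcs of `N` into
(arc sets of) maximal zig-zag trails. -/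
def IsZigZagDecomp (N : Net V) (D : Set (Set (V × V))) : Prop :=
  (∀ B ∈ D, ∃ l : List (V × V),
      IsMaximalZigZag N.nonRootArcs l ∧ {a | a ∈ l} = B) ∧
  (∀ B ∈ D, ∀ B' ∈ D, B ≠ B' → Disjoint B B') ∧
  (∀ B ∈ D, B.Nonempty) ∧
  ⋃₀ D = N.nonRootArcs

/-- A crown: even length at least 4, closing up (first and last arcs share
a tail or share a head). -/
def IsCrown (l : List (V × V)) : Prop :=
  4 ≤ l.length ∧ Even l.length ∧
    ∃ a b : V × V, l.head? = some a ∧ l.getLast? = some b ∧ (a.1 = b.1 ∨ a.2 = b.2)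

/-- An M-fence: even length at least 2, not a crown, both end tails tree vertices. -/
def IsMFence (N : Net V) (l : List (V × V)) : Prop :=
  2 ≤ l.length ∧ Even l.length ∧ ¬ IsCrown l ∧
    ∃ a b : V × V, l.head? = some a ∧ l.getLast? = some b ∧
      N.IsTreeV a.1 ∧ N.IsTreeV b.1

/-- An N-fence: odd length, exactly one of the two end tails is a reticulation. -/
def IsNFence (N : Net V) (l : List (V × V)) : Prop :=
  Odd l.length ∧
    ∃ a b : V × V, l.head? = some a ∧ l.getLast? = some b ∧
      ((N.IsReticV a.1 ∧ ¬ N.IsReticV b.1) ∨ (¬ N.IsReticV a.1 ∧ N.IsReticV b.1))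

/-- A W-fence: even length at least 2, both end tails reticulations. -/
def IsWFence (N : Net V) (l : List (V × V)) : Prop :=
  2 ≤ l.length ∧ Even l.length ∧
    ∃ a b : V × V, l.head? = some a ∧ l.getLast? = some b ∧
      N.IsReticV a.1 ∧ N.IsReticV b.1

end Net

section Basic
open Net
variable {V : Type*} {N : Net V}

lemma arcs_fin (hN : N.IsPhylo) : N.arcs.Finite := hN.2.1

lemma inSet_fin (hN : N.IsPhylo) (v : V) : {a ∈ N.arcs | a.2 = v}.Finite :=
  (arcs_fin hN).subset (fun a ha => ha.1)

lemma outSet_fin (hN : N.IsPhylo) (v : V) : {a ∈ N.arcs | a.1 = v}.Finite :=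
  (arcs_fin hN).subset (fun a ha => ha.1)

lemma no_self_loop (hN : N.IsPhylo) {v : V} (h : (v, v) ∈ N.arcs) : False :=
  hN.2.2.2.2.2.2.2 v (Relation.TransGen.single h)

lemma indeg_le_two (hN : N.IsPhylo) {v : V} (hv : v ∈ N.verts) : N.indeg v ≤ 2 := by
  rcases hN.2.2.2.2.2.2.1 v hv with h | h | h | h
  · rw [h, hN.2.2.2.2.1]; omega
  · rw [h.2.1]; omega
  · rw [h.2.1]
  · rw [h.2.1]; omega

lemma outdeg_le_two (hN : N.IsPhylo) {v : V} (hv : v ∈ N.verts) : N.outdeg v ≤ 2 := by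
  rcases hN.2.2.2.2.2.2.1 v hv with h | h | h | h
  · rw [h, hN.2.2.2.2.2.1]; omega
  · rw [h.2.2]
  · rw [h.2.2]; omega
  · rw [h.2.2]; omega

lemma indeg_ge_two (hN : N.IsPhylo) {a b : V × V} (ha : a ∈ N.arcs) (hb : b ∈ N.arcs)
    (hne : a ≠ b) (h2 : a.2 = b.2) : 2 ≤ N.indeg (a.2) := by
  have : ({a, b} : Set (V × V)) ⊆ {c ∈ N.arcs | c.2 = a.2} := by
    rintro c (rfl | rfl) <;> exact ⟨by assumption, by simp [h2]⟩
  calc 2 = ({a, b} : Set (V × V)).ncard := (Set.ncard_pair hne).symm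
    _ ≤ _ := Set.ncard_le_ncard this (inSet_fin hN _)

lemma outdeg_ge_two (hN : N.IsPhylo) {a b : V × V} (ha : a ∈ N.arcs) (hb : b ∈ N.arcs)
    (hne : a ≠ b) (h1 : a.1 = b.1) : 2 ≤ N.outdeg (a.1) := by
  have : ({a, b} : Set (V × V)) ⊆ {c ∈ N.arcs | c.1 = a.1} := by
    rintro c (rfl | rfl) <;> exact ⟨by assumption, by simp [h1]⟩
  calc 2 = ({a, b} : Set (V × V)).ncard := (Set.ncard_pair hne).symm
    _ ≤ _ := Set.ncard_le_ncard this (outSet_fin hN _)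

lemma mem_verts_of_arc₁ (hN : N.IsPhylo) {a : V × V} (ha : a ∈ N.arcs) : a.1 ∈ N.verts :=
  (hN.2.2.2.1 a ha).1

lemma mem_verts_of_arc₂ (hN : N.IsPhylo) {a : V × V} (ha : a ∈ N.arcs) : a.2 ∈ N.verts :=
  (hN.2.2.2.1 a ha).2

/-- Three distinct arcs cannot share a head. -/
lemma no_three_in (hN : N.IsPhylo) {a b c : V × V} (ha : a ∈ N.arcs) (hb : b ∈ N.arcs)
    (hc : c ∈ N.arcs) (hab : a ≠ b) (hac : a ≠ c) (hbc : b ≠ c)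
    (h2 : a.2 = b.2) (h2' : a.2 = c.2) : False := by
  have hsub : ({a, b, c} : Set (V × V)) ⊆ {d ∈ N.arcs | d.2 = a.2} := by
    rintro d (rfl | rfl | rfl)
    · exact ⟨ha, rfl⟩
    · exact ⟨hb, h2.symm⟩
    · exact ⟨hc, h2'.symm⟩
  have h3 : ({a, b, c} : Set (V × V)).ncard = 3 := by
    rw [Set.ncard_insert_of_notMem (by simp [hab, hac]) (Set.Finite.insert _ (Set.finite_singleton _)),
      Set.ncard_pair hbc]
  have := Set.ncard_le_ncard hsub (inSet_fin hN _)
  rw [h3] at this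
  have := indeg_le_two hN (mem_verts_of_arc₂ hN ha)
  unfold Net.indeg at this
  omega

/-- Three distinct arcs cannot share a tail. -/
lemma no_three_out (hN : N.IsPhylo) {a b c : V × V} (ha : a ∈ N.arcs) (hb : b ∈ N.arcs)
    (hc : c ∈ N.arcs) (hab : a ≠ b) (hac : a ≠ c) (hbc : b ≠ c)
    (h1 : a.1 = b.1) (h1' : a.1 = c.1) : False := by
  have hsub : ({a, b, c} : Set (V × V)) ⊆ {d ∈ N.arcs | d.1 = a.1} := by
    rintro d (rfl | rfl | rfl)
    · exact ⟨ha, rfl⟩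
    · exact ⟨hb, h1.symm⟩
    · exact ⟨hc, h1'.symm⟩
  have h3 : ({a, b, c} : Set (V × V)).ncard = 3 := by
    rw [Set.ncard_insert_of_notMem (by simp [hab, hac]) (Set.Finite.insert _ (Set.finite_singleton _)),
      Set.ncard_pair hbc]
  have := Set.ncard_le_ncard hsub (outSet_fin hN _)
  rw [h3] at this
  have := outdeg_le_two hN (mem_verts_of_arc₁ hN ha)
  unfold Net.outdeg at this
  omega

/-- A vertex with indegree 2 is a reticulation. -/
lemma retic_of_indeg_two (hN : N.IsPhylo) {v : V} (hv : v ∈ N.verts) (h : N.indeg v = 2) :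
    N.IsReticV v := by
  rcases hN.2.2.2.2.2.2.1 v hv with h' | h' | h' | h'
  · rw [h'] at h; rw [hN.2.2.2.2.1] at h; omega
  · rw [h'.2.1] at h; omega
  · exact h'
  · rw [h'.2.1] at h; omega

/-- A non... a vertex with outdegree ≥ 2 is a tree vertex. -/
lemma tree_of_two_out (hN : N.IsPhylo) {a b : V × V} (ha : a ∈ N.arcs) (hb : b ∈ N.arcs)
    (hne : a ≠ b) (h1 : a.1 = b.1) : N.IsTreeV a.1 := by
  have h2 := outdeg_ge_two hN ha hb hne h1
  rcases hN.2.2.2.2.2.2.1 a.1 (mem_verts_of_arc₁ hN ha) with h' | h' | h' | h'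
  · rw [h'] at h2 ⊢; rw [hN.2.2.2.2.2.1] at h2; omega
  · exact h'
  · rw [h'.2.2] at h2; omega
  · rw [h'.2.2] at h2; omega

lemma retic_of_two_in (hN : N.IsPhylo) {a b : V × V} (ha : a ∈ N.arcs) (hb : b ∈ N.arcs)
    (hne : a ≠ b) (h2 : a.2 = b.2) : N.IsReticV a.2 := by
  have hg := indeg_ge_two hN ha hb hne h2
  have hl := indeg_le_two hN (mem_verts_of_arc₂ hN ha)
  exact retic_of_indeg_two hN (mem_verts_of_arc₂ hN ha) (by omega)

/-- outdeg 1 gives a unique out-arc; here existence. -/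
lemma exists_out_arc (hN : N.IsPhylo) {v : V} (h : N.outdeg v = 1) :
    ∃ c, (v, c) ∈ N.arcs := by
  have : {a ∈ N.arcs | a.1 = v}.Nonempty := by
    apply Set.nonempty_of_ncard_ne_zero
    unfold Net.outdeg at h; rw [h]; omega
  obtain ⟨a, ha, h1⟩ := this
  exact ⟨a.2, by rwa [← h1, Prod.mk.eta]⟩

/-- With outdeg v = 1, any two out-arcs from v coincide: so two distinct arcs from v is absurd. -/
lemma not_two_out_of_outdeg_one (hN : N.IsPhylo) {v : V} (h : N.outdeg v = 1)
    {a b : V × V} (ha : a ∈ N.arcs) (hb : b ∈ N.arcs) (hne : a ≠ b)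
    (h1 : a.1 = v) (h1' : b.1 = v) : False := by
  have := outdeg_ge_two hN ha hb hne (h1.trans h1'.symm)
  rw [h1] at this; omega

/-- in-arcs of a reticulation: any third in-arc equals one of two given distinct ones. -/
lemma in_arc_cases (hN : N.IsPhylo) {v : V} {a b c : V × V} (ha : a ∈ N.arcs) (hb : b ∈ N.arcs)
    (hc : c ∈ N.arcs) (hab : a ≠ b) (h2a : a.2 = v) (h2b : b.2 = v) (h2c : c.2 = v) :
    c = a ∨ c = b := by
  by_contra hcon
  push_neg at hcon
  exact no_three_in hN ha hb hc hab (Ne.symm hcon.1) (Ne.symm hcon.2) (h2a.trans h2b.symm)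
    (h2a.trans h2c.symm)

lemma out_arc_cases (hN : N.IsPhylo) {v : V} {a b c : V × V} (ha : a ∈ N.arcs) (hb : b ∈ N.arcs)
    (hc : c ∈ N.arcs) (hab : a ≠ b) (h1a : a.1 = v) (h1b : b.1 = v) (h1c : c.1 = v) :
    c = a ∨ c = b := by
  by_contra hcon
  push_neg at hcon
  exact no_three_out hN ha hb hc hab (Ne.symm hcon.1) (Ne.symm hcon.2) (h1a.trans h1b.symm)
    (h1a.trans h1c.symm)

lemma root_no_in (hN : N.IsPhylo) {a : V × V} (ha : a ∈ N.arcs) : a.2 ≠ N.root := by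
  intro h
  have : 0 < N.indeg a.2 := by
    have hne : {c ∈ N.arcs | c.2 = a.2}.Nonempty := ⟨a, ⟨ha, rfl⟩⟩
    exact (Set.ncard_pos (inSet_fin hN _)).mpr hne
  rw [h, hN.2.2.2.2.1] at this
  omega

end Basic
section Cover
open Net Shape
variable {V : Type*} {N : Net V} {P : Set (Shape V)}

lemma tail_internal {S : Shape V} {a : V × V} (ha : a ∈ S.shapeArcs) : a.1 ∈ S.internals := by
  cases S with
  | cherry p x y => rcases ha with h | h <;> subst h <;> simp [Shape.internals]
  | retic px py x y =>
    rcases ha with h | h | h <;> subst h <;> simp [Shape.internals]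

lemma head_endpoint_or_internal {S : Shape V} {a : V × V} (ha : a ∈ S.shapeArcs) :
    a.2 ∈ S.endpoints ∨ a.2 ∈ S.internals := by
  cases S with
  | cherry p x y => rcases ha with h | h <;> subst h <;> simp [Shape.endpoints]
  | retic px py x y =>
    rcases ha with h | h | h <;> subst h <;> simp [Shape.endpoints, Shape.internals]

/-- All out-arcs of an internal vertex of a shape of a cover belong to that shape,
and there is at least one. -/
lemma internal_arcs (hN : N.IsPhylo) (hP : N.IsCherryCover P) {S : Shape V} (hS : S ∈ P)
    {w : V} (hw : w ∈ S.internals) :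
    (∀ a ∈ N.arcs, a.1 = w → a ∈ S.shapeArcs) ∧ ∃ a ∈ S.shapeArcs, a.1 = w := by
  obtain ⟨hsub, hval⟩ := hP.1 S hS
  cases S with
  | cherry p x y =>
    simp only [Shape.internals, Set.mem_singleton_iff] at hw
    subst hw
    have hx : (w, x) ∈ N.arcs := hsub (by simp only [Shape.shapeArcs, Set.mem_insert_iff, Set.mem_singleton_iff]; tauto)
    have hy : (w, y) ∈ N.arcs := hsub (by simp only [Shape.shapeArcs, Set.mem_insert_iff, Set.mem_singleton_iff]; tauto)
    have hne : ((w, x) : V × V) ≠ (w, y) := by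
      exact fun hc => hval (congrArg Prod.snd hc)
    refine ⟨?_, ⟨(w, x), by simp only [Shape.shapeArcs, Set.mem_insert_iff, Set.mem_singleton_iff]; tauto, rfl⟩⟩
    intro a ha h1
    rcases out_arc_cases hN hx hy ha hne rfl rfl h1 with h | h <;> subst h <;>
      simp only [Shape.shapeArcs, Set.mem_insert_iff, Set.mem_singleton_iff] <;> tauto
  | retic px py x y =>
    obtain ⟨hretic, hxy, hxy2, hxy3⟩ := hval
    have h1 : (px, x) ∈ N.arcs := hsub (by simp only [Shape.shapeArcs, Set.mem_insert_iff, Set.mem_singleton_iff]; tauto)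
    have h2 : (py, px) ∈ N.arcs := hsub (by simp only [Shape.shapeArcs, Set.mem_insert_iff, Set.mem_singleton_iff]; tauto)
    have h3 : (py, y) ∈ N.arcs := hsub (by simp only [Shape.shapeArcs, Set.mem_insert_iff, Set.mem_singleton_iff]; tauto)
    rcases hw with hw | hw
    · subst hw
      refine ⟨?_, ⟨(w, x), by simp only [Shape.shapeArcs, Set.mem_insert_iff, Set.mem_singleton_iff]; tauto, rfl⟩⟩
      intro a ha hh
      have : a = (w, x) := by
        by_contra hc
        exact not_two_out_of_outdeg_one hN hretic.2.2 ha h1 hc hh rfl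
      subst this
      simp only [Shape.shapeArcs, Set.mem_insert_iff, Set.mem_singleton_iff]; tauto
    · simp only [Set.mem_singleton_iff] at hw
      subst hw
      have hne : ((w, px) : V × V) ≠ (w, y) := by
        exact fun hc => hxy2 (congrArg Prod.snd hc)
      refine ⟨?_, ⟨(w, px), by simp only [Shape.shapeArcs, Set.mem_insert_iff, Set.mem_singleton_iff]; tauto, rfl⟩⟩
      intro a ha hh
      rcases out_arc_cases hN h2 h3 ha hne rfl rfl hh with h | h <;> subst h <;>
        simp only [Shape.shapeArcs, Set.mem_insert_iff, Set.mem_singleton_iff] <;> tauto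

lemma internal_ne_root (hP : N.IsCherryCover P) {S : Shape V} (hS : S ∈ P)
    {w : V} (hw : w ∈ S.internals) (hN : N.IsPhylo) : w ≠ N.root := by
  obtain ⟨-, a, ha, h1⟩ := internal_arcs hN hP hS hw
  exact h1 ▸ hP.2.2 S hS a ha

lemma internal_unique (hN : N.IsPhylo) (hP : N.IsCherryCover P) {S S' : Shape V}
    (hS : S ∈ P) (hS' : S' ∈ P) {w : V} (hw : w ∈ S.internals) (hw' : w ∈ S'.internals) :
    S = S' := by
  obtain ⟨-, a, ha, h1⟩ := internal_arcs hN hP hS hw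
  have haN : a ∈ N.arcs := (hP.1 S hS).1 ha
  have ha' : a ∈ S'.shapeArcs := (internal_arcs hN hP hS' hw').1 a haN h1
  have hroot : a.1 ≠ N.root := hP.2.2 S hS a ha
  obtain ⟨B, -, huniq⟩ := hP.2.1 a haN hroot
  exact (huniq S ⟨hS, ha⟩).trans (huniq S' ⟨hS', ha'⟩).symm

lemma step_back (hN : N.IsPhylo) (hP : N.IsCherryCover P) {u e : V}
    {Be : Shape V} (hBe : Be ∈ P) (he : e ∈ Be.internals)
    {B : Shape V} (hB : B ∈ P) (hBa : (u, e) ∈ B.shapeArcs) :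
    B = Be ∨ Net.AuxRel P B Be := by
  rcases head_endpoint_or_internal hBa with hend | hint
  · exact Or.inr ⟨hB, hBe, e, he, hend⟩
  · exact Or.inl (internal_unique hN hP hB hBe hint he)

/-- A directed path between internal vertices of cover shapes yields a path
in the auxiliary graph. -/
lemma auxPath (hN : N.IsPhylo) (hP : N.IsCherryCover P) {s e : V}
    (hpath : Relation.ReflTransGen N.arcRel s e)
    {Bs : Shape V} (hBs : Bs ∈ P) (hs : s ∈ Bs.internals) :
    ∀ Be : Shape V, Be ∈ P → e ∈ Be.internals →
      Relation.ReflTransGen (Net.AuxRel P) Bs Be := by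
  induction hpath with
  | refl =>
    intro Be hBe he
    rw [internal_unique hN hP hBs hBe hs he]
  | @tail u e hpath harc ih =>
    intro Be hBe he
    have hu : u ≠ N.root := by
      rcases Relation.ReflTransGen.cases_tail hpath with h | ⟨c, -, hc⟩
      · subst h; exact internal_ne_root hP hBs hs hN
      · exact root_no_in hN hc
    obtain ⟨Bu, ⟨hBuP, hBua⟩, -⟩ := hP.2.1 (u, e) harc hu
    have huint : u ∈ Bu.internals := tail_internal hBua
    have h1 := ih Bu hBuP huint
    rcases step_back hN hP hBe he hBuP hBua with h | h
    · exact h ▸ h1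
    · exact h1.tail h
end Cover

lemma cover_unique {V : Type*} {N : Net V} {P : Set (Shape V)} (hP : N.IsCherryCover P)
    {a : V × V} (ha : a ∈ N.arcs) (hroot : a.1 ≠ N.root) {S S' : Shape V}
    (hS : S ∈ P) (hS' : S' ∈ P) (haS : a ∈ S.shapeArcs) (haS' : a ∈ S'.shapeArcs) :
    S = S' := by
  obtain ⟨B, -, huniq⟩ := hP.2.1 a ha hroot
  exact (huniq S ⟨hS, haS⟩).trans (huniq S' ⟨hS', haS'⟩).symm
section Fence
open Net Shape
variable {V : Type*} {N : Net V} {P : Set (Shape V)} {l : List (V × V)}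

lemma zz_mem (hzz : Net.IsZigZag N.nonRootArcs l) {m : ℕ} (hm : m < l.length) :
    l.get ⟨m, hm⟩ ∈ N.arcs ∧ (l.get ⟨m, hm⟩).1 ≠ N.root :=
  hzz.2.2.1 _ (l.get_mem _)

lemma zz_ne (hzz : Net.IsZigZag N.nonRootArcs l) {m m' : ℕ} (hm : m < l.length)
    (hm' : m' < l.length) (h : m ≠ m') : l.get ⟨m, hm⟩ ≠ l.get ⟨m', hm'⟩ := by
  intro hc
  exact h (Fin.mk.injEq _ _ _ _ ▸ (hzz.2.1.get_inj_iff.mp hc))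

lemma zz_chain (hzz : Net.IsZigZag N.nonRootArcs l) {m : ℕ} (hm : m + 1 < l.length) :
    (l.get ⟨m, by omega⟩).1 = (l.get ⟨m+1, hm⟩).1 ∨
    (l.get ⟨m, by omega⟩).2 = (l.get ⟨m+1, hm⟩).2 :=
  List.isChain_iff_getElem.mp hzz.2.2.2 m (by omega)

/-- Alternation along an N-fence whose first tail is a reticulation:
0-based even `m` share heads; odd `m` share tails. -/
lemma fence_alt (hN : N.IsPhylo) (hzz : Net.IsZigZag N.nonRootArcs l)
    (h0 : 0 < l.length) (hr : N.IsReticV ((l.get ⟨0, h0⟩).1)) :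
    ∀ m, ∀ hm : m + 1 < l.length,
      (Even m → (l.get ⟨m, by omega⟩).2 = (l.get ⟨m+1, hm⟩).2) ∧
      (Odd m → (l.get ⟨m, by omega⟩).1 = (l.get ⟨m+1, hm⟩).1) := by
  intro m
  induction m using Nat.strong_induction_on with
  | _ m ih =>
    intro hm
    rcases Nat.even_or_odd m with hme | hmo
    · refine ⟨fun _ => ?_, fun hc => by simp [Nat.even_iff, Nat.odd_iff] at hme hc; omega⟩
      rcases zz_chain hzz hm with h | h
      · exfalso
        rcases Nat.eq_zero_or_pos m with rfl | hpos
        · exact not_two_out_of_outdeg_one hN hr.2.2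
            (zz_mem hzz (by omega : (0:ℕ) < l.length)).1
            (zz_mem hzz hm).1 (zz_ne hzz _ _ (by omega)) rfl h.symm
        · obtain ⟨m', rfl⟩ : ∃ m', m = m' + 1 := ⟨m - 1, by omega⟩
          have hprev := (ih m' (by omega) (by omega : m' + 1 < l.length)).2
            (by rcases hme with ⟨t, ht⟩; exact ⟨t-1, by omega⟩)
          exact no_three_out hN (zz_mem hzz (by omega : m' < l.length)).1
            (zz_mem hzz (by omega : m' + 1 < l.length)).1 (zz_mem hzz hm).1
            (zz_ne hzz _ _ (by omega)) (zz_ne hzz _ _ (by omega)) (zz_ne hzz _ _ (by omega))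
            hprev (hprev.trans h)
      · exact h
    · refine ⟨fun hc => by simp [Nat.even_iff, Nat.odd_iff] at hmo hc; omega, fun _ => ?_⟩
      rcases zz_chain hzz hm with h | h
      · exact h
      · exfalso
        have hpos : 0 < m := hmo.pos
        obtain ⟨m', rfl⟩ : ∃ m', m = m' + 1 := ⟨m - 1, by omega⟩
        have hprev := (ih m' (by omega) (by omega : m' + 1 < l.length)).1
          (by rcases hmo with ⟨t, ht⟩; exact ⟨t, by omega⟩)
        exact no_three_in hN (zz_mem hzz (by omega : m' < l.length)).1
          (zz_mem hzz (by omega : m' + 1 < l.length)).1 (zz_mem hzz hm).1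
          (zz_ne hzz _ _ (by omega)) (zz_ne hzz _ _ (by omega)) (zz_ne hzz _ _ (by omega))
          hprev (hprev.trans h)
end Fence
section Determination
open Net Shape
variable {V : Type*} {N : Net V} {P : Set (Shape V)} {l : List (V × V)}

lemma retic_mem_shapeArcs (px py x y : V) :
    (py, px) ∈ (Shape.retic px py x y).shapeArcs ∧
    (py, y) ∈ (Shape.retic px py x y).shapeArcs ∧
    (px, x) ∈ (Shape.retic px py x y).shapeArcs := by
  refine ⟨?_, ?_, ?_⟩ <;>
    simp only [Shape.shapeArcs, Set.mem_insert_iff, Set.mem_singleton_iff] <;> tauto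

/-- The reticulation cherry shapes covering an N-fence are uniquely determined. -/
lemma fence_shape (hN : N.IsPhylo) (hP : N.IsCherryCover P)
    (hzz : Net.IsZigZag N.nonRootArcs l)
    (h0 : 0 < l.length) (hr : N.IsReticV ((l.get ⟨0, h0⟩).1)) :
    ∀ o, Odd o → ∀ ho1 : o + 1 < l.length,
      ∃ c, ((l.get ⟨o, by omega⟩).2, c) ∈ N.arcs ∧
        Shape.retic (l.get ⟨o, by omega⟩).2 (l.get ⟨o, by omega⟩).1 c
          (l.get ⟨o+1, ho1⟩).2 ∈ P := by
  intro o
  induction o using Nat.strong_induction_on with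
  | _ o ih =>
    intro ho ho1
    have hpos := ho.pos
    obtain ⟨o', rfl⟩ : ∃ o', o = o' + 1 := ⟨o - 1, by omega⟩
    have hlen : o' + 1 + 1 < l.length := ho1
    have hheads : (l.get ⟨o', by omega⟩).2 = (l.get ⟨o'+1, by omega⟩).2 :=
      (fence_alt hN hzz h0 hr o' (by omega)).1 (by rcases ho with ⟨t, ht⟩; exact ⟨t, by omega⟩)
    have hmemo' := (zz_mem hzz (show o' < l.length by omega)).1
    have hmemo := (zz_mem hzz (show o'+1 < l.length by omega)).1
    have hmemo1 := (zz_mem hzz ho1).1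
    have hneo := zz_ne hzz (show o' < l.length by omega) (show o'+1 < l.length by omega)
      (by omega)
    set x := (l.get ⟨o'+1, by omega⟩).2 with hx_def
    have hxret : N.IsReticV x := by
      have := retic_of_two_in hN hmemo' hmemo hneo hheads
      rwa [hheads] at this
    obtain ⟨c, hc⟩ := exists_out_arc hN hxret.2.2
    have hxroot : x ≠ N.root := root_no_in hN hmemo
    obtain ⟨C, ⟨hCP, hCarc⟩, -⟩ := hP.2.1 (x, c) hc hxroot
    obtain ⟨hCsub, hCval⟩ := hP.1 C hCP
    cases C with
    | cherry p a b =>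
      exfalso
      have hpx : p = x := by
        have := tail_internal hCarc
        simpa [Shape.internals] using this.symm
      subst hpx
      have haarc : (x, a) ∈ N.arcs := hCsub (by simp only [Shape.shapeArcs,
        Set.mem_insert_iff, Set.mem_singleton_iff]; tauto)
      have hbarc : (x, b) ∈ N.arcs := hCsub (by simp only [Shape.shapeArcs,
        Set.mem_insert_iff, Set.mem_singleton_iff]; tauto)
      exact not_two_out_of_outdeg_one hN hxret.2.2 haarc hbarc
        (fun hcon => hCval (congrArg Prod.snd hcon)) rfl rfl
    | retic px py a b =>
      obtain ⟨hret', hpxpy, hpxb, hab⟩ := hCval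
      have h1 : (px, a) ∈ N.arcs := hCsub (retic_mem_shapeArcs px py a b).2.2
      have h2 : (py, px) ∈ N.arcs := hCsub (retic_mem_shapeArcs px py a b).1
      have h3 : (py, b) ∈ N.arcs := hCsub (retic_mem_shapeArcs px py a b).2.1
      have hkey : px = x ∧ a = c := by
        rcases hCarc with h | h | h
        · exact ⟨(congrArg Prod.fst h).symm, (congrArg Prod.snd h).symm⟩
        · exfalso
          have hpy : py = x := (congrArg Prod.fst h).symm
          subst hpy
          exact not_two_out_of_outdeg_one hN hxret.2.2 h2 h3
            (fun hcon => hpxb (congrArg Prod.snd hcon)) rfl rfl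
        · exfalso
          have hpy : py = x := (congrArg Prod.fst h).symm
          subst hpy
          exact not_two_out_of_outdeg_one hN hxret.2.2 h2 h3
            (fun hcon => hpxb (congrArg Prod.snd hcon)) rfl rfl
      obtain ⟨hpxx, -⟩ := hkey
      subst hpxx
      rcases in_arc_cases hN hmemo' hmemo h2 hneo hheads rfl rfl with hcase | hcase
      · exfalso
        rcases Nat.eq_zero_or_pos o' with rfl | ho'pos
        · have hpyr : py = (l.get ⟨0, h0⟩).1 := congrArg Prod.fst hcase
          exact not_two_out_of_outdeg_one hN (hpyr ▸ hr.2.2) h2 h3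
            (fun hcon => hpxb (congrArg Prod.snd hcon)) rfl rfl
        · obtain ⟨o'', rfl⟩ : ∃ o'', o' = o'' + 1 := ⟨o' - 1, by omega⟩
          have ho''odd : Odd o'' := by
            rcases ho with ⟨t, ht⟩; exact ⟨t - 1, by omega⟩
          have htails : (l.get ⟨o'', by omega⟩).1 = (l.get ⟨o''+1, by omega⟩).1 :=
            (fence_alt hN hzz h0 hr o'' (by omega)).2 ho''odd
          have hmemo'' := (zz_mem hzz (show o'' < l.length by omega)).1
          have hne2 := zz_ne hzz (show o'' < l.length by omega)
            (show o''+1 < l.length by omega) (by omega)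
          have hpy2 : py = (l.get ⟨o''+1, by omega⟩).1 := congrArg Prod.fst hcase
          rcases out_arc_cases hN hmemo'' hmemo' h3 hne2 rfl htails.symm
            (hpy2.trans htails.symm) with hb | hb
          · -- C also covers arc o-2 : contradiction with the inductively known shape
            obtain ⟨c'', hc''arc, hBP⟩ := ih o'' (by omega) ho''odd (by omega)
            have hCcov : l.get ⟨o'', by omega⟩ ∈ (Shape.retic x py a b).shapeArcs := by
              rw [← hb]
              exact (retic_mem_shapeArcs x py a b).2.1
            have hBcov : l.get ⟨o'', by omega⟩ ∈
                (Shape.retic (l.get ⟨o'', by omega⟩).2 (l.get ⟨o'', by omega⟩).1 c''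
                  (l.get ⟨o''+1, by omega⟩).2).shapeArcs := by
              have := (retic_mem_shapeArcs (l.get ⟨o'', by omega⟩).2
                (l.get ⟨o'', by omega⟩).1 c'' (l.get ⟨o''+1, by omega⟩).2).1
              simpa only [Prod.mk.eta] using this
            have hCeqB := cover_unique hP hmemo''
              (zz_mem hzz (show o'' < l.length by omega)).2 hCP hBP hCcov hBcov
            have hxx : x = (l.get ⟨o'', by omega⟩).2 := by
              injection hCeqB
            exact no_three_in hN hmemo hmemo' hmemo''
              (Ne.symm hneo) (zz_ne hzz _ _ (by omega)) (zz_ne hzz _ _ (by omega))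
              hheads.symm hxx
          · have := hb.trans hcase.symm
            exact hpxb (congrArg Prod.snd this).symm
      · -- py is the common tail of arcs o, o+1
        have hpy2 : py = (l.get ⟨o'+1, by omega⟩).1 := congrArg Prod.fst hcase
        have htails2 : (l.get ⟨o'+1, by omega⟩).1 = (l.get ⟨o'+1+1, ho1⟩).1 :=
          (fence_alt hN hzz h0 hr (o'+1) (by omega)).2 ho
        rcases out_arc_cases hN hmemo hmemo1 h3 (zz_ne hzz _ _ (by omega)) rfl
          htails2.symm (hpy2.trans rfl) with hb | hb
        · exfalso
          have := hb.trans hcase.symm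
          exact hpxb (congrArg Prod.snd this).symm
        · refine ⟨a, h1, ?_⟩
          have hbval : b = (l.get ⟨o'+1+1, ho1⟩).2 := congrArg Prod.snd hb
          rw [← hpy2, ← hbval]
          exact hCP
end Determination
section Chain
open Net Shape
variable {V : Type*} {N : Net V} {P : Set (Shape V)} {l : List (V × V)}

lemma retic_int_left (px py x y : V) : px ∈ (Shape.retic px py x y).internals :=
  Set.mem_insert _ _

lemma retic_int_right (px py x y : V) : py ∈ (Shape.retic px py x y).internals := by
  simp [Shape.internals]

lemma retic_endp_right (px py x y : V) : y ∈ (Shape.retic px py x y).endpoints := by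
  simp [Shape.endpoints]

lemma fence_chain (hN : N.IsPhylo) (hP : N.IsCherryCover P)
    (hzz : Net.IsZigZag N.nonRootArcs l)
    (h0 : 0 < l.length) (hr : N.IsReticV ((l.get ⟨0, h0⟩).1)) :
    ∀ o', Odd o' → ∀ ho1' : o' + 1 < l.length, ∀ o, Odd o → o ≤ o' →
      ∀ ho1 : o + 1 < l.length, ∀ c c',
      Shape.retic (l.get ⟨o, by omega⟩).2 (l.get ⟨o, by omega⟩).1 c
        (l.get ⟨o+1, ho1⟩).2 ∈ P →
      Shape.retic (l.get ⟨o', by omega⟩).2 (l.get ⟨o', by omega⟩).1 c'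
        (l.get ⟨o'+1, ho1'⟩).2 ∈ P →
      Relation.ReflTransGen (Net.AuxRel P)
        (Shape.retic (l.get ⟨o, by omega⟩).2 (l.get ⟨o, by omega⟩).1 c
          (l.get ⟨o+1, ho1⟩).2)
        (Shape.retic (l.get ⟨o', by omega⟩).2 (l.get ⟨o', by omega⟩).1 c'
          (l.get ⟨o'+1, ho1'⟩).2) := by
  intro o'
  induction o' using Nat.strong_induction_on with
  | _ o' ih =>
    intro ho' ho1' o ho hle ho1 c c' hBo hBo'
    rcases eq_or_lt_of_le hle with rfl | hlt
    · -- same index : the shapes agree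
      have harc : l.get ⟨o, by omega⟩ ∈ N.arcs := (zz_mem hzz (by omega)).1
      have hroot : (l.get ⟨o, by omega⟩).1 ≠ N.root := (zz_mem hzz (by omega)).2
      have hco :
          l.get ⟨o, by omega⟩ ∈ (Shape.retic (l.get ⟨o, by omega⟩).2
            (l.get ⟨o, by omega⟩).1 c (l.get ⟨o+1, ho1⟩).2).shapeArcs := by
        have := (retic_mem_shapeArcs (l.get ⟨o, (by omega : o < l.length)⟩).2
          (l.get ⟨o, by omega⟩).1 c (l.get ⟨o+1, ho1⟩).2).1
        simpa only [Prod.mk.eta] using this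
      have hco' :
          l.get ⟨o, by omega⟩ ∈ (Shape.retic (l.get ⟨o, by omega⟩).2
            (l.get ⟨o, by omega⟩).1 c' (l.get ⟨o+1, ho1'⟩).2).shapeArcs := by
        have := (retic_mem_shapeArcs (l.get ⟨o, (by omega : o < l.length)⟩).2
          (l.get ⟨o, by omega⟩).1 c' (l.get ⟨o+1, ho1'⟩).2).1
        simpa only [Prod.mk.eta] using this
      rw [cover_unique hP harc hroot hBo hBo' hco hco']
    · -- o + 2 ≤ o'
      have h2 : o + 2 ≤ o' := by
        rcases ho with ⟨s, hs⟩; rcases ho' with ⟨t, ht⟩; omega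
      obtain ⟨o'', rfl⟩ : ∃ t, o' = t + 2 := ⟨o' - 2, by omega⟩
      have ho''odd : Odd o'' := by
        rcases ho' with ⟨t, ht⟩; exact ⟨t - 1, by omega⟩
      obtain ⟨c'', hc''arc, hB''⟩ := fence_shape hN hP hzz h0 hr o'' ho''odd (by omega)
      have hrtg := ih o'' (by omega) ho''odd (by omega) o ho (by omega) ho1 c c'' hBo hB''
      refine hrtg.tail ?_
      refine ⟨hB'', hBo', ⟨(l.get ⟨o''+2, by omega⟩).2, ?_, ?_⟩⟩
      · exact retic_int_left _ _ _ _
      · have halt : (l.get ⟨o''+1, by omega⟩).2 = (l.get ⟨o''+1+1, by omega⟩).2 :=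
          (fence_alt hN hzz h0 hr (o''+1) (by omega)).1
            (by rcases ho''odd with ⟨t, ht⟩; exact ⟨t+1, by omega⟩)
        have : (l.get ⟨o''+2, by omega⟩).2 = (l.get ⟨o''+1, by omega⟩).2 := halt.symm
        rw [this]
        exact retic_endp_right _ _ _ _
end Chain
section Cycle
open Net Shape
variable {V : Type*} {N : Net V} {P : Set (Shape V)} {l : List (V × V)}

lemma fence_chain_trans (hN : N.IsPhylo) (hP : N.IsCherryCover P)
    (hzz : Net.IsZigZag N.nonRootArcs l)
    (h0 : 0 < l.length) (hr : N.IsReticV ((l.get ⟨0, h0⟩).1)) :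
    ∀ o', Odd o' → ∀ ho1' : o' + 1 < l.length, ∀ o, Odd o → o < o' →
      ∀ ho1 : o + 1 < l.length, ∀ c c',
      Shape.retic (l.get ⟨o, by omega⟩).2 (l.get ⟨o, by omega⟩).1 c
        (l.get ⟨o+1, ho1⟩).2 ∈ P →
      Shape.retic (l.get ⟨o', by omega⟩).2 (l.get ⟨o', by omega⟩).1 c'
        (l.get ⟨o'+1, ho1'⟩).2 ∈ P →
      Relation.TransGen (Net.AuxRel P)
        (Shape.retic (l.get ⟨o, by omega⟩).2 (l.get ⟨o, by omega⟩).1 c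
          (l.get ⟨o+1, ho1⟩).2)
        (Shape.retic (l.get ⟨o', by omega⟩).2 (l.get ⟨o', by omega⟩).1 c'
          (l.get ⟨o'+1, ho1'⟩).2) := by
  intro o' ho' ho1' o ho hlt ho1 c c' hBo hBo'
  have h2 : o + 2 ≤ o' := by
    rcases ho with ⟨s, hs⟩; rcases ho' with ⟨t, ht⟩; omega
  obtain ⟨o'', rfl⟩ : ∃ t, o' = t + 2 := ⟨o' - 2, by omega⟩
  have ho''odd : Odd o'' := by
    rcases ho' with ⟨t, ht⟩; exact ⟨t - 1, by omega⟩
  obtain ⟨c'', hc''arc, hB''⟩ := fence_shape hN hP hzz h0 hr o'' ho''odd (by omega)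
  have hrtg := fence_chain hN hP hzz h0 hr o'' ho''odd (by omega) o ho (by omega) ho1
    c c'' hBo hB''
  refine Relation.TransGen.tail' hrtg ?_
  refine ⟨hB'', hBo', ⟨(l.get ⟨o''+2, by omega⟩).2, ?_, ?_⟩⟩
  · exact retic_int_left _ _ _ _
  · have halt : (l.get ⟨o''+1, by omega⟩).2 = (l.get ⟨o''+1+1, by omega⟩).2 :=
      (fence_alt hN hzz h0 hr (o''+1) (by omega)).1
        (by rcases ho''odd with ⟨t, ht⟩; exact ⟨t+1, by omega⟩)
    have : (l.get ⟨o''+2, by omega⟩).2 = (l.get ⟨o''+1, by omega⟩).2 := halt.symm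
    rw [this]
    exact retic_endp_right _ _ _ _

lemma head?_get {α : Type*} {l : List α} {a : α} (h : l.head? = some a) (h0 : 0 < l.length) :
    l.get ⟨0, h0⟩ = a := by
  cases l with
  | nil => simp at h
  | cons x xs => simpa using h

lemma crossing_cycle {V : Type*} (N : Net V) (hN : N.IsPhylo)
    (lu lv : List (V × V))
    (hzzu : Net.IsZigZag N.nonRootArcs lu) (hzzv : Net.IsZigZag N.nonRootArcs lv)
    (hNu : Odd lu.length) (hNv : Odd lv.length)
    (hlu3 : 3 ≤ lu.length) (hlv3 : 3 ≤ lv.length)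
    (hfu : ∃ a : V × V, lu.head? = some a ∧ N.IsReticV a.1)
    (hfv : ∃ a : V × V, lv.head? = some a ∧ N.IsReticV a.1)
    (h i j k : ℕ)
    (hhe : Even h) (hie : Even i) (hje : Even j) (hke : Even k)
    (hk2 : 2 ≤ k) (hkh : k < h) (hh : h ≤ lu.length)
    (hi2 : 2 ≤ i) (hij : i < j) (hj : j ≤ lv.length)
    (hpath1 : Relation.ReflTransGen N.arcRel
      (lu.get ⟨h - 1, Nat.lt_of_lt_of_le (Nat.sub_lt (by omega) Nat.one_pos) (by omega)⟩).2 (lv.get ⟨i - 1, Nat.lt_of_lt_of_le (Nat.sub_lt (by omega) Nat.one_pos) (by omega)⟩).1)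
    (hpath2 : Relation.ReflTransGen N.arcRel
      (lv.get ⟨j - 1, Nat.lt_of_lt_of_le (Nat.sub_lt (by omega) Nat.one_pos) (by omega)⟩).2 (lu.get ⟨k - 1, Nat.lt_of_lt_of_le (Nat.sub_lt (by omega) Nat.one_pos) (by omega)⟩).1)
    (P : Set (Shape V)) (hP : N.IsCherryCover P) :
    ∃ B : Shape V, Relation.TransGen (Net.AuxRel P) B B := by
  have h0u : 0 < lu.length := by omega
  have h0v : 0 < lv.length := by omega
  obtain ⟨au, hau, hru'⟩ := hfu
  obtain ⟨av, hav, hrv'⟩ := hfv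
  have hru : N.IsReticV ((lu.get ⟨0, h0u⟩).1) := by rw [head?_get hau h0u]; exact hru'
  have hrv : N.IsReticV ((lv.get ⟨0, h0v⟩).1) := by rw [head?_get hav h0v]; exact hrv'
  -- parity bookkeeping
  have hhlen : h < lu.length := by
    rcases hhe with ⟨t, ht⟩; rcases hNu with ⟨s, hs⟩; omega
  have hjlen : j < lv.length := by
    rcases hje with ⟨t, ht⟩; rcases hNv with ⟨s, hs⟩; omega
  have hoddH : Odd (h - 1) := by rcases hhe with ⟨t, ht⟩; exact ⟨t - 1, by omega⟩
  have hoddI : Odd (i - 1) := by rcases hie with ⟨t, ht⟩; exact ⟨t - 1, by omega⟩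
  have hoddJ : Odd (j - 1) := by rcases hje with ⟨t, ht⟩; exact ⟨t - 1, by omega⟩
  have hoddK : Odd (k - 1) := by rcases hke with ⟨t, ht⟩; exact ⟨t - 1, by omega⟩
  have hbH : h - 1 + 1 < lu.length := by omega
  have hbK : k - 1 + 1 < lu.length := by omega
  have hbI : i - 1 + 1 < lv.length := by omega
  have hbJ : j - 1 + 1 < lv.length := by omega
  obtain ⟨cH, -, hBuH⟩ := fence_shape hN hP hzzu h0u hru (h-1) hoddH hbH
  obtain ⟨cK, -, hBuK⟩ := fence_shape hN hP hzzu h0u hru (k-1) hoddK hbK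
  obtain ⟨cI, -, hBvI⟩ := fence_shape hN hP hzzv h0v hrv (i-1) hoddI hbI
  obtain ⟨cJ, -, hBvJ⟩ := fence_shape hN hP hzzv h0v hrv (j-1) hoddJ hbJ
  have t1 := auxPath hN hP hpath1 hBuH (retic_int_left _ _ _ _) _ hBvI
    (retic_int_right _ _ _ _)
  have t2 := fence_chain_trans hN hP hzzv h0v hrv (j-1) hoddJ hbJ (i-1) hoddI
    (by omega) hbI cI cJ hBvI hBvJ
  have t3 := auxPath hN hP hpath2 hBvJ (retic_int_left _ _ _ _) _ hBuK
    (retic_int_right _ _ _ _)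
  have t4 := fence_chain_trans hN hP hzzu h0u hru (h-1) hoddH hbH (k-1) hoddK
    (by omega) hbK cK cH hBuK hBuH
  exact ⟨_, ((Relation.TransGen.trans_right t1 t2).trans_left t3).trans t4⟩
end Cycle
section Transfer
open Net Shape
variable {V : Type*} {N : Net V}

lemma not_two_in_of_indeg_one (hN : N.IsPhylo) {v : V} (h : N.indeg v = 1)
    {a b : V × V} (ha : a ∈ N.arcs) (hb : b ∈ N.arcs) (hne : a ≠ b)
    (h2 : a.2 = v) (h2' : b.2 = v) : False := by
  have := indeg_ge_two hN ha hb hne (h2.trans h2'.symm)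
  rw [h2] at this; omega

lemma no_out_of_outdeg_zero (hN : N.IsPhylo) {v : V} (h : N.outdeg v = 0)
    {a : V × V} (ha : a ∈ N.arcs) (h1 : a.1 = v) : False := by
  have : 0 < N.outdeg v := by
    refine (Set.ncard_pos (outSet_fin hN v)).mpr ⟨a, ha, h1⟩
  omega

/-- Acyclicity transfer: if `C` is a sink of the auxiliary graph of `P` and all
other auxiliary arcs map (via `φ`) to auxiliary arcs of an acyclic `P'`, then
`P` is acyclic. -/
lemma aux_acyclic_transfer {P P' : Set (Shape V)} {C : Shape V} (φ : Shape V → Shape V)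
    (hsink : ∀ B', ¬ Net.AuxRel P C B')
    (hmap : ∀ B1 B2, Net.AuxRel P B1 B2 → B1 ≠ C → B2 ≠ C →
      Net.AuxRel P' (φ B1) (φ B2))
    (hacyc : Net.AuxAcyclic P') : Net.AuxAcyclic P := by
  have key : ∀ a b, Relation.TransGen (Net.AuxRel P) a b → a ≠ C →
      b = C ∨ Relation.TransGen (Net.AuxRel P') (φ a) (φ b) := by
    intro a b htg
    induction htg with
    | @single b hab =>
      intro ha
      by_cases hb : b = C
      · exact Or.inl hb
      · exact Or.inr (Relation.TransGen.single (hmap _ _ hab ha hb))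
    | @tail b' c htg hbc ih =>
      intro ha
      have hb' : b' ≠ C := by
        rintro rfl
        exact hsink _ hbc
      rcases ih ha with rfl | ihtg
      · exact absurd rfl hb'
      · by_cases hc : c = C
        · exact Or.inl hc
        · exact Or.inr (ihtg.tail (hmap _ _ hbc hb' hc))
  intro B hB
  rcases eq_or_ne B C with rfl | hne
  · obtain ⟨b, hb, -⟩ := Relation.TransGen.head'_iff.mp hB
    exact hsink _ hb
  · rcases key B B hB hne with rfl | hcyc
    · exact hne rfl
    · exact hacyc _ hcyc

/-- The empty cover works for a single-leaf network, and is acyclic. -/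
lemma single_leaf_cover (M : Net V) (hs : M.IsSingleLeaf) :
    M.IsCherryCover ∅ ∧ Net.AuxAcyclic (∅ : Set (Shape V)) := by
  obtain ⟨l, hl, hverts, harcs⟩ := hs
  refine ⟨⟨fun S hS => absurd hS (Set.notMem_empty S), ?_,
    fun S hS => absurd hS (Set.notMem_empty S)⟩, ?_⟩
  · intro a ha hroot
    rw [harcs] at ha
    exact absurd (congrArg Prod.fst ha) hroot
  · intro B hB
    cases hB with
    | single hab => exact absurd hab.1 (Set.notMem_empty _)
    | tail _ hab => exact absurd hab.1 (Set.notMem_empty _)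

/-- Lifting acyclicity of `N` through arc surgery. -/
lemma acyclic_of_rel_le {M : Net V} (hN : N.IsPhylo)
    (hle : ∀ a b, M.arcRel a b → Relation.TransGen N.arcRel a b) :
    ∀ v : V, ¬ Relation.TransGen M.arcRel v v := by
  intro v hv
  have h' := Relation.TransGen.mono hle _ _ hv
  rw [Relation.transGen_idem] at h'
  exact hN.2.2.2.2.2.2.2 v h'
end Transfer
section CherryPhylo
open Net Shape
variable {V : Type*} {N M : Net V}

lemma cherryRed_phylo (hN : N.IsPhylo) (hred : N.CherryRed M) : M.IsPhylo := by
  obtain ⟨x, y, p, gp, hxy, hlx, hly, hpx, hpy, hgp, hroot_eq, hverts, harcs⟩ := hred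
  have hM : ∀ a : V × V, a ∈ M.arcs ↔
      ((a ∈ N.arcs ∧ a ≠ (p,x) ∧ a ≠ (p,y) ∧ a ≠ (gp,p)) ∨ a = (gp,y)) := by
    intro a
    rw [harcs]
    simp only [Set.mem_union, Set.mem_diff, Set.mem_insert_iff, Set.mem_singleton_iff]
    tauto
  have hpxy : ((p,x) : V × V) ≠ (p,y) := fun hc => hxy (congrArg Prod.snd hc)
  have hptree : N.IsTreeV p := tree_of_two_out hN hpx hpy hpxy rfl
  have hxp : x ≠ p := fun hc => no_self_loop hN (hc ▸ hpx)
  have hyp : y ≠ p := fun hc => no_self_loop hN (hc ▸ hpy)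
  have hpgp : p ≠ gp := fun hc => no_self_loop hN (hc ▸ hgp)
  have hgpx : gp ≠ x := fun hc => no_out_of_outdeg_zero hN hlx.2.2 hgp hc
  have hgpy : gp ≠ y := fun hc => no_out_of_outdeg_zero hN hly.2.2 hgp hc
  have hxroot : x ≠ N.root := root_no_in hN hpx
  have hyroot : y ≠ N.root := root_no_in hN hpy
  have hproot : p ≠ N.root := root_no_in hN hgp
  have hgpy_not : (gp, y) ∉ N.arcs := fun hc =>
    not_two_in_of_indeg_one hN hly.2.1 hpy hc (fun hc' => hpgp (congrArg Prod.fst hc')) rfl rfl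
  have hout_p : ∀ a ∈ N.arcs, a.1 = p → a = (p,x) ∨ a = (p,y) := fun a ha h1 =>
    out_arc_cases hN hpx hpy ha hpxy rfl rfl h1
  have hin_x : ∀ a ∈ N.arcs, a.2 = x → a = (p, x) := by
    intro a ha h2
    by_contra hc
    exact not_two_in_of_indeg_one hN hlx.2.1 ha hpx hc h2 rfl
  have hin_p : ∀ a ∈ N.arcs, a.2 = p → a = (gp, p) := by
    intro a ha h2
    by_contra hc
    exact not_two_in_of_indeg_one hN hptree.2.1 ha hgp hc h2 rfl
  have hin_y : ∀ a ∈ N.arcs, a.2 = y → a = (p, y) := by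
    intro a ha h2
    by_contra hc
    exact not_two_in_of_indeg_one hN hly.2.1 ha hpy hc h2 rfl
  -- membership of M.verts
  have hmem : ∀ v, v ∈ N.verts → v ≠ x → v ≠ p → v ∈ M.verts := by
    intro v hv h1 h2
    rw [hverts]
    exact ⟨hv, by simp [h1, h2]⟩
  -- degree computations
  have hin_eq : ∀ v, v ≠ x → v ≠ p → v ≠ y → M.indeg v = N.indeg v := by
    intro v hvx hvp hvy
    unfold Net.indeg
    congr 1
    ext a
    simp only [Set.mem_setOf_eq, hM]
    constructor
    · rintro ⟨(⟨haN, -⟩ | rfl), h2⟩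
      · exact ⟨haN, h2⟩
      · exact absurd h2.symm hvy
    · rintro ⟨haN, h2⟩
      refine ⟨Or.inl ⟨haN, ?_, ?_, ?_⟩, h2⟩ <;> rintro rfl
      · exact hvx h2.symm
      · exact hvy h2.symm
      · exact hvp h2.symm
  have hin_y' : M.indeg y = 1 := by
    have : {a ∈ M.arcs | a.2 = y} = {((gp, y) : V × V)} := by
      ext a
      simp only [Set.mem_setOf_eq, Set.mem_singleton_iff, hM]
      constructor
      · rintro ⟨(⟨haN, h1, h2, h3⟩ | rfl), h4⟩
        · exact absurd (hin_y a haN h4) h2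
        · rfl
      · rintro rfl
        exact ⟨Or.inr rfl, rfl⟩
    unfold Net.indeg
    rw [this, Set.ncard_singleton]
  have hout_eq : ∀ v, v ≠ p → v ≠ gp → M.outdeg v = N.outdeg v := by
    intro v hvp hvgp
    unfold Net.outdeg
    congr 1
    ext a
    simp only [Set.mem_setOf_eq, hM]
    constructor
    · rintro ⟨(⟨haN, -⟩ | rfl), h1⟩
      · exact ⟨haN, h1⟩
      · exact absurd h1.symm hvgp
    · rintro ⟨haN, h1⟩
      refine ⟨Or.inl ⟨haN, ?_, ?_, ?_⟩, h1⟩ <;> rintro rfl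
      · exact hvp h1.symm
      · exact hvp h1.symm
      · exact hvgp h1.symm
  have hout_gp : M.outdeg gp = N.outdeg gp := by
    have hset : {a ∈ M.arcs | a.1 = gp} =
        insert ((gp, y) : V × V) ({a ∈ N.arcs | a.1 = gp} \ {(gp, p)}) := by
      ext a
      simp only [Set.mem_setOf_eq, Set.mem_insert_iff, Set.mem_diff,
        Set.mem_singleton_iff, hM]
      constructor
      · rintro ⟨(⟨haN, h1, h2, h3⟩ | rfl), h4⟩
        · exact Or.inr ⟨⟨haN, h4⟩, h3⟩
        · exact Or.inl rfl
      · rintro (rfl | ⟨⟨haN, h1⟩, h2⟩)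
        · exact ⟨Or.inr rfl, rfl⟩
        · refine ⟨Or.inl ⟨haN, ?_, ?_, h2⟩, h1⟩ <;> rintro rfl
          · exact hpgp h1
          · exact hpgp h1
    have hgpp_mem : ((gp, p) : V × V) ∈ {a ∈ N.arcs | a.1 = gp} := ⟨hgp, rfl⟩
    have hfin : {a ∈ N.arcs | a.1 = gp}.Finite := outSet_fin hN gp
    have hpos : 0 < {a ∈ N.arcs | a.1 = gp}.ncard := (Set.ncard_pos hfin).mpr ⟨_, hgpp_mem⟩
    have hnotmem : ((gp, y) : V × V) ∉ {a ∈ N.arcs | a.1 = gp} \ {(gp, p)} := by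
      rintro ⟨⟨hc, -⟩, -⟩
      exact hgpy_not hc
    unfold Net.outdeg
    rw [hset, Set.ncard_insert_of_notMem hnotmem hfin.diff,
      Set.ncard_diff_singleton_of_mem hgpp_mem]
    omega
  -- now the eight components
  have hMverts_fin : M.verts.Finite := by
    rw [hverts]; exact hN.1.diff
  have hMarcs_fin : M.arcs.Finite := by
    rw [harcs]; exact hN.2.1.diff.union (Set.finite_singleton _)
  have hMroot : M.root ∈ M.verts := by
    rw [hroot_eq]
    exact hmem _ hN.2.2.1 (Ne.symm hxroot) (Ne.symm hproot)
  have hMends : ∀ a ∈ M.arcs, a.1 ∈ M.verts ∧ a.2 ∈ M.verts := by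
    intro a ha
    rw [hM] at ha
    rcases ha with ⟨haN, h1, h2, h3⟩ | rfl
    · obtain ⟨hv1, hv2⟩ := hN.2.2.2.1 a haN
      constructor
      · refine hmem _ hv1 ?_ ?_
        · intro hc; exact no_out_of_outdeg_zero hN hlx.2.2 haN hc
        · intro hc
          rcases hout_p a haN hc with rfl | rfl
          · exact h1 rfl
          · exact h2 rfl
      · refine hmem _ hv2 ?_ ?_
        · intro hc; exact h1 (hin_x a haN hc)
        · intro hc; exact h3 (hin_p a haN hc)
    · exact ⟨hmem _ (hN.2.2.2.1 _ hgp).1 hgpx hpgp.symm,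
        hmem _ (hN.2.2.2.1 _ hpy).2 (Ne.symm hxy) hyp⟩
  have hMindeg_root : M.indeg M.root = 0 := by
    have : {a ∈ M.arcs | a.2 = M.root} = ∅ := by
      ext a
      simp only [Set.mem_setOf_eq, Set.mem_empty_iff_false, iff_false, not_and]
      intro ha h2
      rw [hM] at ha
      rcases ha with ⟨haN, -⟩ | rfl
      · exact root_no_in hN haN (h2.trans hroot_eq)
      · exact hyroot (h2.trans hroot_eq)
    unfold Net.indeg
    rw [this, Set.ncard_empty]
  have hMoutdeg_root : M.outdeg M.root = 1 := by
    rcases eq_or_ne gp N.root with hgproot | hgproot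
    · have : {a ∈ M.arcs | a.1 = M.root} = {((gp, y) : V × V)} := by
        ext a
        simp only [Set.mem_setOf_eq, Set.mem_singleton_iff, hM]
        constructor
        · rintro ⟨(⟨haN, h1, h2, h3⟩ | rfl), h4⟩
          · exfalso
            have hdeg : N.outdeg gp = 1 := by rw [hgproot]; exact hN.2.2.2.2.2.1
            have heq : a = (gp, p) := by
              by_contra hc
              exact not_two_out_of_outdeg_one hN hdeg haN hgp hc
                ((h4.trans hroot_eq).trans hgproot.symm) rfl
            exact h3 heq
          · rfl
        · rintro rfl
          exact ⟨Or.inr rfl, by rw [hroot_eq, hgproot]⟩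
      unfold Net.outdeg
      rw [this, Set.ncard_singleton]
    · have : {a ∈ M.arcs | a.1 = M.root} = {a ∈ N.arcs | a.1 = N.root} := by
        ext a
        simp only [Set.mem_setOf_eq, hM]
        constructor
        · rintro ⟨(⟨haN, -⟩ | rfl), h4⟩
          · exact ⟨haN, h4.trans hroot_eq⟩
          · exact absurd (h4.trans hroot_eq) hgproot
        · rintro ⟨haN, h1⟩
          refine ⟨Or.inl ⟨haN, ?_, ?_, ?_⟩, h1.trans hroot_eq.symm⟩ <;> rintro rfl
          · exact hproot h1
          · exact hproot h1
          · exact hgproot h1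
      unfold Net.outdeg
      rw [this]
      exact hN.2.2.2.2.2.1
  have hMclass : ∀ v ∈ M.verts, v = M.root ∨ M.IsTreeV v ∨ M.IsReticV v ∨ M.IsLeafV v := by
    intro v hv
    rw [hverts] at hv
    obtain ⟨hvN, hv2⟩ := hv
    simp only [Set.mem_insert_iff, Set.mem_singleton_iff, not_or] at hv2
    obtain ⟨hvx, hvp⟩ := hv2
    have hvmem : v ∈ M.verts := hmem v hvN hvx hvp
    have hout : M.outdeg v = N.outdeg v := by
      rcases eq_or_ne v gp with rfl | hne
      · exact hout_gp
      · exact hout_eq v hvp hne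
    rcases hN.2.2.2.2.2.2.1 v hvN with rfl | hc | hc | hc
    · exact Or.inl hroot_eq.symm
    · have hvy : v ≠ y := by
        rintro rfl
        exact absurd (hly.2.2.symm.trans hc.2.2) (by omega)
      exact Or.inr (Or.inl ⟨hvmem, (hin_eq v hvx hvp hvy).trans hc.2.1, hout.trans hc.2.2⟩)
    · have hvy : v ≠ y := by
        rintro rfl
        exact absurd (hly.2.2.symm.trans hc.2.2) (by omega)
      exact Or.inr (Or.inr (Or.inl
        ⟨hvmem, (hin_eq v hvx hvp hvy).trans hc.2.1, hout.trans hc.2.2⟩))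
    · rcases eq_or_ne v y with rfl | hvy
      · exact Or.inr (Or.inr (Or.inr ⟨hvmem, hin_y',
          hout.trans hc.2.2⟩))
      · exact Or.inr (Or.inr (Or.inr
          ⟨hvmem, (hin_eq v hvx hvp hvy).trans hc.2.1, hout.trans hc.2.2⟩))
  have hMacyc : ∀ v : V, ¬ Relation.TransGen M.arcRel v v := by
    refine acyclic_of_rel_le hN ?_
    intro a b hab
    rw [show M.arcRel a b ↔ (a, b) ∈ M.arcs from Iff.rfl, hM] at hab
    rcases hab with ⟨haN, -⟩ | heq
    · exact Relation.TransGen.single haN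
    · have h1 : a = gp := congrArg Prod.fst heq
      have h2 : b = y := congrArg Prod.snd heq
      subst h1; subst h2
      exact Relation.TransGen.head hgp (Relation.TransGen.single hpy)
  exact ⟨hMverts_fin, hMarcs_fin, hMroot, hMends, hMindeg_root, hMoutdeg_root, hMclass, hMacyc⟩
end CherryPhylo
section ReticPhylo
open Net Shape
variable {V : Type*} {N M : Net V}

lemma reticRed_phylo (hN : N.IsPhylo) (hred : N.ReticCherryRed M) : M.IsPhylo := by
  obtain ⟨x, y, px, py, qx, qy, hxy, hlx, hly, hpxx, hpypx, hpyy, hpx2, hqxpx, hqxpy,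
    hqypy, hroot_eq, hverts, harcs⟩ := hred
  have hM : ∀ a : V × V, a ∈ M.arcs ↔
      ((a ∈ N.arcs ∧ a ≠ (py,px) ∧ a ≠ (qx,px) ∧ a ≠ (px,x) ∧ a ≠ (qy,py) ∧ a ≠ (py,y))
        ∨ a = (qx,x) ∨ a = (qy,y)) := by
    intro a
    rw [harcs]
    simp only [Set.mem_union, Set.mem_diff, Set.mem_insert_iff, Set.mem_singleton_iff]
    tauto
  -- basic inequalities
  have hpxy : px ≠ y := fun hc => no_out_of_outdeg_zero hN hly.2.2 hpxx hc
  have hpyx' : ((py,px) : V × V) ≠ (py,y) := fun hc => hpxy (congrArg Prod.snd hc)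
  have hpytree : N.IsTreeV py := tree_of_two_out hN hpypx hpyy hpyx' rfl
  have hpxret : N.IsReticV px :=
    retic_of_indeg_two hN (mem_verts_of_arc₂ hN hpypx) hpx2
  have hpxx' : px ≠ x := fun hc => no_self_loop hN (hc ▸ hpxx)
  have hpypx' : py ≠ px := fun hc => no_self_loop hN (hc ▸ hpypx)
  have hpyy' : py ≠ y := fun hc => no_self_loop hN (hc ▸ hpyy)
  have hqxpx' : qx ≠ px := fun hc => no_self_loop hN (hc ▸ hqxpx)
  have hqypy' : qy ≠ py := fun hc => no_self_loop hN (hc ▸ hqypy)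
  -- unique out-arc of px
  have hout_px : ∀ a ∈ N.arcs, a.1 = px → a = (px, x) := by
    intro a ha h1
    by_contra hc
    exact not_two_out_of_outdeg_one hN hpxret.2.2 ha hpxx hc h1 rfl
  have hpxqy : px ≠ qy := by
    intro hc
    have := hout_px (px, py) (by rw [hc]; exact hqypy) rfl
    have hpyx : py = x := congrArg Prod.snd this
    exact no_out_of_outdeg_zero hN (hpyx ▸ hlx.2.2) hpyy rfl
  have hpyx'' : py ≠ x := fun hc => no_out_of_outdeg_zero hN (hc ▸ hlx.2.2) hpyy rfl
  have hqxx : qx ≠ x := fun hc => no_out_of_outdeg_zero hN hlx.2.2 hqxpx hc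
  have hqyx : qy ≠ x := fun hc => no_out_of_outdeg_zero hN hlx.2.2 hqypy hc
  have hqxy : qx ≠ y := fun hc => no_out_of_outdeg_zero hN hly.2.2 hqxpx hc
  have hqyy : qy ≠ y := fun hc => no_out_of_outdeg_zero hN hly.2.2 hqypy hc
  -- removed/added arcs do not overlap
  have hqxx_not : (qx, x) ∉ N.arcs := fun hc =>
    not_two_in_of_indeg_one hN hlx.2.1 hc hpxx
      (fun hc' => hqxpx' (congrArg Prod.fst hc')) rfl rfl
  have hqyy_not : (qy, y) ∉ N.arcs := fun hc =>
    not_two_in_of_indeg_one hN hly.2.1 hc hpyy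
      (fun hc' => hqypy' (congrArg Prod.fst hc')) rfl rfl
  -- in/out arc inventories
  have hqppair : ((py, px) : V × V) ≠ (qx, px) := fun hc =>
    hqxpy (congrArg Prod.fst hc).symm
  have hin_px : ∀ a ∈ N.arcs, a.2 = px → a = (py, px) ∨ a = (qx, px) :=
    fun a ha h2 => in_arc_cases hN hpypx hqxpx ha hqppair rfl rfl h2
  have hin_py : ∀ a ∈ N.arcs, a.2 = py → a = (qy, py) := by
    intro a ha h2
    by_contra hc
    exact not_two_in_of_indeg_one hN hpytree.2.1 ha hqypy hc h2 rfl
  have hout_py : ∀ a ∈ N.arcs, a.1 = py → a = (py, px) ∨ a = (py, y) :=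
    fun a ha h1 => out_arc_cases hN hpypx hpyy ha hpyx' rfl rfl h1
  have hin_x : ∀ a ∈ N.arcs, a.2 = x → a = (px, x) := by
    intro a ha h2
    by_contra hc
    exact not_two_in_of_indeg_one hN hlx.2.1 ha hpxx hc h2 rfl
  have hin_y : ∀ a ∈ N.arcs, a.2 = y → a = (py, y) := by
    intro a ha h2
    by_contra hc
    exact not_two_in_of_indeg_one hN hly.2.1 ha hpyy hc h2 rfl
  have hpxroot : px ≠ N.root := root_no_in hN hpypx
  have hpyroot : py ≠ N.root := root_no_in hN hqypy
  have hxroot : x ≠ N.root := root_no_in hN hpxx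
  have hyroot : y ≠ N.root := root_no_in hN hpyy
  have hmem : ∀ v, v ∈ N.verts → v ≠ px → v ≠ py → v ∈ M.verts := by
    intro v hv h1 h2
    rw [hverts]
    exact ⟨hv, by simp [h1, h2]⟩
  -- degrees
  have hin_eq : ∀ v, v ≠ px → v ≠ py → v ≠ x → v ≠ y → M.indeg v = N.indeg v := by
    intro v h1 h2 h3 h4
    unfold Net.indeg
    congr 1
    ext a
    simp only [Set.mem_setOf_eq, hM]
    constructor
    · rintro ⟨(⟨haN, -⟩ | rfl | rfl), hh⟩
      · exact ⟨haN, hh⟩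
      · exact absurd hh.symm h3
      · exact absurd hh.symm h4
    · rintro ⟨haN, hh⟩
      refine ⟨Or.inl ⟨haN, ?_, ?_, ?_, ?_, ?_⟩, hh⟩ <;> rintro rfl
      · exact h1 hh.symm
      · exact h1 hh.symm
      · exact h3 hh.symm
      · exact h2 hh.symm
      · exact h4 hh.symm
  have hin_x' : M.indeg x = 1 := by
    have : {a ∈ M.arcs | a.2 = x} = {((qx, x) : V × V)} := by
      ext a
      simp only [Set.mem_setOf_eq, Set.mem_singleton_iff, hM]
      constructor
      · rintro ⟨(⟨haN, h1, h2, h3, h4, h5⟩ | rfl | rfl), hh⟩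
        · exact absurd (hin_x a haN hh) h3
        · rfl
        · exact absurd hh.symm hxy
      · rintro rfl
        exact ⟨Or.inr (Or.inl rfl), rfl⟩
    unfold Net.indeg
    rw [this, Set.ncard_singleton]
  have hin_y' : M.indeg y = 1 := by
    have : {a ∈ M.arcs | a.2 = y} = {((qy, y) : V × V)} := by
      ext a
      simp only [Set.mem_setOf_eq, Set.mem_singleton_iff, hM]
      constructor
      · rintro ⟨(⟨haN, h1, h2, h3, h4, h5⟩ | rfl | rfl), hh⟩
        · exact absurd (hin_y a haN hh) h5
        · exact absurd hh hxy
        · rfl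
      · rintro rfl
        exact ⟨Or.inr (Or.inr rfl), rfl⟩
    unfold Net.indeg
    rw [this, Set.ncard_singleton]
  have hout_eq : ∀ v, v ≠ px → v ≠ py → v ≠ qx → v ≠ qy → M.outdeg v = N.outdeg v := by
    intro v h1 h2 h3 h4
    unfold Net.outdeg
    congr 1
    ext a
    simp only [Set.mem_setOf_eq, hM]
    constructor
    · rintro ⟨(⟨haN, -⟩ | rfl | rfl), hh⟩
      · exact ⟨haN, hh⟩
      · exact absurd hh.symm h3
      · exact absurd hh.symm h4
    · rintro ⟨haN, hh⟩
      refine ⟨Or.inl ⟨haN, ?_, ?_, ?_, ?_, ?_⟩, hh⟩ <;> rintro rfl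
      · exact h2 hh.symm
      · exact h3 hh.symm
      · exact h1 hh.symm
      · exact h4 hh.symm
      · exact h2 hh.symm
  have hout_qx : M.outdeg qx = N.outdeg qx := by
    rcases eq_or_ne qx qy with rfl | hqq
    · -- qx = qy has the two out-arcs (qx,px) and (qx,py)
      have hpp : ((qx, px) : V × V) ≠ (qx, py) := fun hc => hpypx' (congrArg Prod.snd hc).symm
      have houtN : {a ∈ N.arcs | a.1 = qx} = {((qx,px) : V × V), (qx,py)} := by
        ext a
        simp only [Set.mem_setOf_eq, Set.mem_insert_iff, Set.mem_singleton_iff]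
        constructor
        · rintro ⟨haN, hh⟩
          exact out_arc_cases hN hqxpx hqypy haN hpp rfl rfl hh
        · rintro (rfl | rfl)
          · exact ⟨hqxpx, rfl⟩
          · exact ⟨hqypy, rfl⟩
      have houtM : {a ∈ M.arcs | a.1 = qx} = {((qx,x) : V × V), (qx,y)} := by
        ext a
        simp only [Set.mem_setOf_eq, Set.mem_insert_iff, Set.mem_singleton_iff, hM]
        constructor
        · rintro ⟨(⟨haN, h1, h2, h3, h4, h5⟩ | rfl | rfl), hh⟩
          · exfalso
            rcases out_arc_cases hN hqxpx hqypy haN hpp rfl rfl hh with rfl | rfl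
            · exact h2 rfl
            · exact h4 rfl
          · exact Or.inl rfl
          · exact Or.inr rfl
        · rintro (rfl | rfl)
          · exact ⟨Or.inr (Or.inl rfl), rfl⟩
          · exact ⟨Or.inr (Or.inr rfl), rfl⟩
      unfold Net.outdeg
      rw [houtN, houtM, Set.ncard_pair hpp,
        Set.ncard_pair (fun hc => hxy (congrArg Prod.snd hc))]
    · have hset : {a ∈ M.arcs | a.1 = qx} =
          insert ((qx, x) : V × V) ({a ∈ N.arcs | a.1 = qx} \ {(qx, px)}) := by
        ext a
        simp only [Set.mem_setOf_eq, Set.mem_insert_iff, Set.mem_diff,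
          Set.mem_singleton_iff, hM]
        constructor
        · rintro ⟨(⟨haN, h1, h2, h3, h4, h5⟩ | rfl | rfl), hh⟩
          · exact Or.inr ⟨⟨haN, hh⟩, h2⟩
          · exact Or.inl rfl
          · exact absurd hh.symm hqq
        · rintro (rfl | ⟨⟨haN, h1⟩, h2⟩)
          · exact ⟨Or.inr (Or.inl rfl), rfl⟩
          · refine ⟨Or.inl ⟨haN, ?_, ?_, ?_, ?_, ?_⟩, h1⟩ <;> rintro rfl
            · exact hqxpy h1.symm
            · exact h2 rfl
            · exact hqxpx' h1.symm
            · exact hqq h1.symm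
            · exact hqxpy h1.symm
      have hmemN : ((qx, px) : V × V) ∈ {a ∈ N.arcs | a.1 = qx} := ⟨hqxpx, rfl⟩
      have hfin : {a ∈ N.arcs | a.1 = qx}.Finite := outSet_fin hN qx
      have hpos : 0 < {a ∈ N.arcs | a.1 = qx}.ncard := (Set.ncard_pos hfin).mpr ⟨_, hmemN⟩
      have hnm : ((qx, x) : V × V) ∉ {a ∈ N.arcs | a.1 = qx} \ {(qx, px)} := by
        rintro ⟨⟨hc, -⟩, -⟩
        exact hqxx_not hc
      unfold Net.outdeg
      rw [hset, Set.ncard_insert_of_notMem hnm hfin.diff,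
        Set.ncard_diff_singleton_of_mem hmemN]
      omega
  have hout_qy : M.outdeg qy = N.outdeg qy := by
    rcases eq_or_ne qx qy with rfl | hqq
    · exact hout_qx
    · have hset : {a ∈ M.arcs | a.1 = qy} =
          insert ((qy, y) : V × V) ({a ∈ N.arcs | a.1 = qy} \ {(qy, py)}) := by
        ext a
        simp only [Set.mem_setOf_eq, Set.mem_insert_iff, Set.mem_diff,
          Set.mem_singleton_iff, hM]
        constructor
        · rintro ⟨(⟨haN, h1, h2, h3, h4, h5⟩ | rfl | rfl), hh⟩
          · exact Or.inr ⟨⟨haN, hh⟩, h4⟩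
          · exact absurd hh hqq
          · exact Or.inl rfl
        · rintro (rfl | ⟨⟨haN, h1⟩, h2⟩)
          · exact ⟨Or.inr (Or.inr rfl), rfl⟩
          · refine ⟨Or.inl ⟨haN, ?_, ?_, ?_, ?_, ?_⟩, h1⟩ <;> rintro rfl
            · exact hqypy' h1.symm
            · exact hqq h1
            · exact hpxqy h1
            · exact h2 rfl
            · exact hqypy' h1.symm
      have hmemN : ((qy, py) : V × V) ∈ {a ∈ N.arcs | a.1 = qy} := ⟨hqypy, rfl⟩
      have hfin : {a ∈ N.arcs | a.1 = qy}.Finite := outSet_fin hN qy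
      have hpos : 0 < {a ∈ N.arcs | a.1 = qy}.ncard := (Set.ncard_pos hfin).mpr ⟨_, hmemN⟩
      have hnm : ((qy, y) : V × V) ∉ {a ∈ N.arcs | a.1 = qy} \ {(qy, py)} := by
        rintro ⟨⟨hc, -⟩, -⟩
        exact hqyy_not hc
      unfold Net.outdeg
      rw [hset, Set.ncard_insert_of_notMem hnm hfin.diff,
        Set.ncard_diff_singleton_of_mem hmemN]
      omega
  -- eight components
  refine ⟨by rw [hverts]; exact hN.1.diff,
    by rw [harcs]; exact hN.2.1.diff.union (((Set.finite_singleton _).insert _)),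
    ?_, ?_, ?_, ?_, ?_, ?_⟩
  · rw [hroot_eq]
    exact hmem _ hN.2.2.1 (Ne.symm hpxroot) (Ne.symm hpyroot)
  · intro a ha
    rw [hM] at ha
    rcases ha with ⟨haN, h1, h2, h3, h4, h5⟩ | rfl | rfl
    · obtain ⟨hv1, hv2⟩ := hN.2.2.2.1 a haN
      constructor
      · refine hmem _ hv1 ?_ ?_
        · intro hc; exact h3 (hout_px a haN hc)
        · intro hc
          rcases hout_py a haN hc with rfl | rfl
          · exact h1 rfl
          · exact h5 rfl
      · refine hmem _ hv2 ?_ ?_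
        · intro hc
          rcases hin_px a haN hc with rfl | rfl
          · exact h1 rfl
          · exact h2 rfl
        · intro hc; exact h4 (hin_py a haN hc)
    · exact ⟨hmem qx (mem_verts_of_arc₁ hN hqxpx) hqxpx' hqxpy,
        hmem x (mem_verts_of_arc₂ hN hpxx) (Ne.symm hpxx') (Ne.symm hpyx'')⟩
    · exact ⟨hmem qy (mem_verts_of_arc₁ hN hqypy) (Ne.symm hpxqy) hqypy',
        hmem y (mem_verts_of_arc₂ hN hpyy) (Ne.symm hpxy) (Ne.symm hpyy')⟩
  · -- indeg of root
    have : {a ∈ M.arcs | a.2 = M.root} = ∅ := by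
      ext a
      simp only [Set.mem_setOf_eq, Set.mem_empty_iff_false, iff_false, not_and]
      intro ha hh
      rw [hM] at ha
      rcases ha with ⟨haN, -⟩ | rfl | rfl
      · exact root_no_in hN haN (hh.trans hroot_eq)
      · exact hxroot (hh.trans hroot_eq)
      · exact hyroot (hh.trans hroot_eq)
    unfold Net.indeg
    rw [this, Set.ncard_empty]
  · -- outdeg of root
    rw [hroot_eq]
    rcases eq_or_ne N.root qx with rfl | hrqx
    · rw [hout_qx]; exact hN.2.2.2.2.2.1
    · rcases eq_or_ne N.root qy with rfl | hrqy
      · rw [hout_qy]; exact hN.2.2.2.2.2.1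
      · rw [hout_eq _ (Ne.symm hpxroot) (Ne.symm hpyroot) hrqx hrqy]
        exact hN.2.2.2.2.2.1
  · -- classification
    intro v hv
    rw [hverts] at hv
    obtain ⟨hvN, hv2⟩ := hv
    simp only [Set.mem_insert_iff, Set.mem_singleton_iff, not_or] at hv2
    obtain ⟨hvpx, hvpy⟩ := hv2
    have hvmem : v ∈ M.verts := hmem v hvN hvpx hvpy
    have hout : M.outdeg v = N.outdeg v := by
      rcases eq_or_ne v qx with rfl | h1
      · exact hout_qx
      · rcases eq_or_ne v qy with rfl | h2
        · exact hout_qy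
        · exact hout_eq v hvpx hvpy h1 h2
    have hin : M.indeg v = N.indeg v := by
      rcases eq_or_ne v x with rfl | h1
      · rw [hin_x', hlx.2.1]
      · rcases eq_or_ne v y with rfl | h2
        · rw [hin_y', hly.2.1]
        · exact hin_eq v hvpx hvpy h1 h2
    rcases hN.2.2.2.2.2.2.1 v hvN with rfl | hc | hc | hc
    · exact Or.inl hroot_eq.symm
    · exact Or.inr (Or.inl ⟨hvmem, hin.trans hc.2.1, hout.trans hc.2.2⟩)
    · exact Or.inr (Or.inr (Or.inl ⟨hvmem, hin.trans hc.2.1, hout.trans hc.2.2⟩))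
    · exact Or.inr (Or.inr (Or.inr ⟨hvmem, hin.trans hc.2.1, hout.trans hc.2.2⟩))
  · refine acyclic_of_rel_le hN ?_
    intro a b hab
    rw [show M.arcRel a b ↔ (a, b) ∈ M.arcs from Iff.rfl, hM] at hab
    rcases hab with ⟨haN, -⟩ | heq | heq
    · exact Relation.TransGen.single haN
    · have h1 : a = qx := congrArg Prod.fst heq
      have h2 : b = x := congrArg Prod.snd heq
      subst h1; subst h2
      exact Relation.TransGen.head hqxpx (Relation.TransGen.single hpxx)
    · have h1 : a = qy := congrArg Prod.fst heq
      have h2 : b = y := congrArg Prod.snd heq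
      subst h1; subst h2
      exact Relation.TransGen.head hqypy (Relation.TransGen.single hpyy)
end ReticPhylo
section CherryCover
open Net Shape
variable {V : Type*} {N M : Net V}

lemma internal_has_tail_arc {S : Shape V} {w : V} (hw : w ∈ S.internals) :
    ∃ a ∈ S.shapeArcs, a.1 = w := by
  cases S with
  | cherry p x y =>
    simp only [Shape.internals, Set.mem_singleton_iff] at hw
    subst hw
    exact ⟨(w, x), by simp only [Shape.shapeArcs, Set.mem_insert_iff,
      Set.mem_singleton_iff]; tauto, rfl⟩
  | retic px py x y =>
    rcases hw with hw | hw
    · subst hw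
      exact ⟨(w, x), by simp only [Shape.shapeArcs, Set.mem_insert_iff,
        Set.mem_singleton_iff]; tauto, rfl⟩
    · simp only [Set.mem_singleton_iff] at hw
      subst hw
      exact ⟨(w, px), by simp only [Shape.shapeArcs, Set.mem_insert_iff,
        Set.mem_singleton_iff]; tauto, rfl⟩

/-- Reticulations of the reduced network are reticulations of the original
network (cherry reduction). -/
lemma cherryRed_retic (hN : N.IsPhylo) (hred : N.CherryRed M) {v : V}
    (hv : M.IsReticV v) : N.IsReticV v := by
  obtain ⟨x, y, p, gp, hxy, hlx, hly, hpx, hpy, hgp, hroot_eq, hverts, harcs⟩ := hred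
  have hM : ∀ a : V × V, a ∈ M.arcs ↔
      ((a ∈ N.arcs ∧ a ≠ (p,x) ∧ a ≠ (p,y) ∧ a ≠ (gp,p)) ∨ a = (gp,y)) := by
    intro a
    rw [harcs]
    simp only [Set.mem_union, Set.mem_diff, Set.mem_insert_iff, Set.mem_singleton_iff]
    tauto
  have hpxy : ((p,x) : V × V) ≠ (p,y) := fun hc => hxy (congrArg Prod.snd hc)
  have hptree : N.IsTreeV p := tree_of_two_out hN hpx hpy hpxy rfl
  have hpgp : p ≠ gp := fun hc => no_self_loop hN (hc ▸ hgp)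
  have hgpy_not : (gp, y) ∉ N.arcs := fun hc =>
    not_two_in_of_indeg_one hN hly.2.1 hpy hc (fun hc' => hpgp (congrArg Prod.fst hc')) rfl rfl
  obtain ⟨hvM, hvin, hvout⟩ := hv
  rw [hverts] at hvM
  obtain ⟨hvN, hv2⟩ := hvM
  simp only [Set.mem_insert_iff, Set.mem_singleton_iff, not_or] at hv2
  obtain ⟨hvx, hvp⟩ := hv2
  have hvy : v ≠ y := by
    rintro rfl
    -- indeg of y in M is 1 : its only in-arc is (gp,y)
    have hin_yN : ∀ a ∈ N.arcs, a.2 = v → a = (p, v) := by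
      intro a ha h2
      by_contra hc
      exact not_two_in_of_indeg_one hN hly.2.1 ha hpy hc h2 rfl
    have : {a ∈ M.arcs | a.2 = v} = {((gp, v) : V × V)} := by
      ext a
      simp only [Set.mem_setOf_eq, Set.mem_singleton_iff, hM]
      constructor
      · rintro ⟨(⟨haN, h1, h2, h3⟩ | rfl), h4⟩
        · exact absurd (hin_yN a haN h4) h2
        · rfl
      · rintro rfl
        exact ⟨Or.inr rfl, rfl⟩
    unfold Net.indeg at hvin
    rw [this, Set.ncard_singleton] at hvin
    omega
  -- indegree transfers
  have hin : N.indeg v = M.indeg v := by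
    unfold Net.indeg
    congr 1
    ext a
    simp only [Set.mem_setOf_eq, hM]
    constructor
    · rintro ⟨haN, h2⟩
      refine ⟨Or.inl ⟨haN, ?_, ?_, ?_⟩, h2⟩ <;> rintro rfl
      · exact hvx h2.symm
      · exact hvy h2.symm
      · exact hvp h2.symm
    · rintro ⟨(⟨haN, -⟩ | rfl), h2⟩
      · exact ⟨haN, h2⟩
      · exact absurd h2.symm hvy
  have hout : N.outdeg v = M.outdeg v := by
    rcases eq_or_ne v gp with rfl | hvgp
    · have hset : {a ∈ M.arcs | a.1 = v} =
          insert ((v, y) : V × V) ({a ∈ N.arcs | a.1 = v} \ {(v, p)}) := by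
        ext a
        simp only [Set.mem_setOf_eq, Set.mem_insert_iff, Set.mem_diff,
          Set.mem_singleton_iff, hM]
        constructor
        · rintro ⟨(⟨haN, h1, h2, h3⟩ | rfl), h4⟩
          · exact Or.inr ⟨⟨haN, h4⟩, h3⟩
          · exact Or.inl rfl
        · rintro (rfl | ⟨⟨haN, h1⟩, h2⟩)
          · exact ⟨Or.inr rfl, rfl⟩
          · refine ⟨Or.inl ⟨haN, ?_, ?_, h2⟩, h1⟩ <;> rintro rfl
            · exact hpgp h1
            · exact hpgp h1
      have hmemN : ((v, p) : V × V) ∈ {a ∈ N.arcs | a.1 = v} := ⟨hgp, rfl⟩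
      have hfin : {a ∈ N.arcs | a.1 = v}.Finite := outSet_fin hN v
      have hpos : 0 < {a ∈ N.arcs | a.1 = v}.ncard := (Set.ncard_pos hfin).mpr ⟨_, hmemN⟩
      have hnm : ((v, y) : V × V) ∉ {a ∈ N.arcs | a.1 = v} \ {(v, p)} := by
        rintro ⟨⟨hc, -⟩, -⟩
        exact hgpy_not hc
      unfold Net.outdeg
      rw [hset, Set.ncard_insert_of_notMem hnm hfin.diff,
        Set.ncard_diff_singleton_of_mem hmemN]
      omega
    · unfold Net.outdeg
      congr 1
      ext a
      simp only [Set.mem_setOf_eq, hM]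
      constructor
      · rintro ⟨haN, h1⟩
        refine ⟨Or.inl ⟨haN, ?_, ?_, ?_⟩, h1⟩ <;> rintro rfl
        · exact hvp h1.symm
        · exact hvp h1.symm
        · exact hvgp h1.symm
      · rintro ⟨(⟨haN, -⟩ | rfl), h1⟩
        · exact ⟨haN, h1⟩
        · exact absurd h1.symm hvgp
  exact ⟨hvN, hin.trans hvin, hout.trans hvout⟩
end CherryCover
section CherryCoverMain
open Net Shape
variable {V : Type*} {N M : Net V}

lemma cherryRed_cover (hN : N.IsPhylo) (hred : N.CherryRed M) {P' : Set (Shape V)}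
    (hcov : M.IsCherryCover P') (hacyc : Net.AuxAcyclic P') :
    ∃ P : Set (Shape V), N.IsCherryCover P ∧ Net.AuxAcyclic P := by
  classical
  have hred' := hred
  obtain ⟨x, y, p, gp, hxy, hlx, hly, hpx, hpy, hgp, hroot_eq, hverts, harcs⟩ := hred
  have hM : ∀ a : V × V, a ∈ M.arcs ↔
      ((a ∈ N.arcs ∧ a ≠ (p,x) ∧ a ≠ (p,y) ∧ a ≠ (gp,p)) ∨ a = (gp,y)) := by
    intro a
    rw [harcs]
    simp only [Set.mem_union, Set.mem_diff, Set.mem_insert_iff, Set.mem_singleton_iff]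
    tauto
  have hpxy : ((p,x) : V × V) ≠ (p,y) := fun hc => hxy (congrArg Prod.snd hc)
  have hptree : N.IsTreeV p := tree_of_two_out hN hpx hpy hpxy rfl
  have hxp : x ≠ p := fun hc => no_self_loop hN (hc ▸ hpx)
  have hyp : y ≠ p := fun hc => no_self_loop hN (hc ▸ hpy)
  have hpgp : p ≠ gp := fun hc => no_self_loop hN (hc ▸ hgp)
  have hgpx : gp ≠ x := fun hc => no_out_of_outdeg_zero hN hlx.2.2 hgp hc
  have hgpy : gp ≠ y := fun hc => no_out_of_outdeg_zero hN hly.2.2 hgp hc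
  have hxroot : x ≠ N.root := root_no_in hN hpx
  have hyroot : y ≠ N.root := root_no_in hN hpy
  have hproot : p ≠ N.root := root_no_in hN hgp
  have hgpy_not : (gp, y) ∉ N.arcs := fun hc =>
    not_two_in_of_indeg_one hN hly.2.1 hpy hc (fun hc' => hpgp (congrArg Prod.fst hc')) rfl rfl
  have hout_p : ∀ a ∈ N.arcs, a.1 = p → a = (p,x) ∨ a = (p,y) := fun a ha h1 =>
    out_arc_cases hN hpx hpy ha hpxy rfl rfl h1
  have hin_p : ∀ a ∈ N.arcs, a.2 = p → a = (gp, p) := by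
    intro a ha h2
    by_contra hc
    exact not_two_in_of_indeg_one hN hptree.2.1 ha hgp hc h2 rfl
  have hin_y : ∀ a ∈ N.arcs, a.2 = y → a = (p, y) := by
    intro a ha h2
    by_contra hc
    exact not_two_in_of_indeg_one hN hly.2.1 ha hpy hc h2 rfl
  have hnotM_px : ((p,x) : V × V) ∉ M.arcs := by
    rw [hM]
    rintro (⟨-, hc, -⟩ | hc)
    · exact hc rfl
    · exact hpgp (congrArg Prod.fst hc)
  have hnotM_py : ((p,y) : V × V) ∉ M.arcs := by
    rw [hM]
    rintro (⟨-, -, hc, -⟩ | hc)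
    · exact hc rfl
    · exact hpgp (congrArg Prod.fst hc)
  have hnotM_gpp : ((gp,p) : V × V) ∉ M.arcs := by
    rw [hM]
    rintro (⟨-, -, -, hc⟩ | hc)
    · exact hc rfl
    · exact hyp (congrArg Prod.snd hc).symm
  have hMsubN : ∀ a ∈ M.arcs, a ≠ (gp, y) → a ∈ N.arcs := by
    intro a ha hne
    rw [hM] at ha
    rcases ha with ⟨haN, -⟩ | rfl
    · exact haN
    · exact absurd rfl hne
  have hp_no_out_M : ∀ a ∈ M.arcs, a.1 ≠ p := by
    intro a ha hc
    rw [hM] at ha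
    rcases ha with ⟨haN, h1, h2, -⟩ | rfl
    · rcases hout_p a haN hc with rfl | rfl
      · exact h1 rfl
      · exact h2 rfl
    · exact hpgp hc.symm
  have hp_no_in_M : ∀ a ∈ M.arcs, a.2 ≠ p := by
    intro a ha hc
    rw [hM] at ha
    rcases ha with ⟨haN, -, -, h3⟩ | rfl
    · exact h3 (hin_p a haN hc)
    · exact hyp hc
  have hleaf_no_out_M : ∀ a ∈ M.arcs, a.1 ≠ x ∧ a.1 ≠ y := by
    intro a ha
    rw [hM] at ha
    rcases ha with ⟨haN, -⟩ | rfl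
    · exact ⟨fun hc => no_out_of_outdeg_zero hN hlx.2.2 haN hc,
        fun hc => no_out_of_outdeg_zero hN hly.2.2 haN hc⟩
    · exact ⟨hgpx, hgpy⟩
  have hinM_y : M.indeg y = 1 := by
    have : {a ∈ M.arcs | a.2 = y} = {((gp, y) : V × V)} := by
      ext a
      simp only [Set.mem_setOf_eq, Set.mem_singleton_iff, hM]
      constructor
      · rintro ⟨(⟨haN, h1, h2, h3⟩ | rfl), h4⟩
        · exact absurd (hin_y a haN h4) h2
        · rfl
      · rintro rfl
        exact ⟨Or.inr rfl, rfl⟩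
    unfold Net.indeg
    rw [this, Set.ncard_singleton]
  -- validity transfer for shapes of P'
  have hvalidN : ∀ S ∈ P', S.IsValid N := by
    intro S hS
    have hval := (hcov.1 S hS).2
    cases S with
    | cherry a b c => exact hval
    | retic px' py' x' y'' =>
      exact ⟨cherryRed_retic hN hred' hval.1, hval.2⟩
  set C : Shape V := Shape.cherry p x y with hC_def
  have hCarcsN : C.shapeArcs ⊆ N.arcs := by
    rintro a (rfl | ha)
    · exact hpx
    · simp only [Set.mem_singleton_iff] at ha
      subst ha
      exact hpy
  have hCint : C.internals = {p} := rfl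
  have hCend : C.endpoints = {x, y} := rfl
  have hpxC : ((p,x) : V × V) ∈ C.shapeArcs := Set.mem_insert _ _
  have hpyC : ((p,y) : V × V) ∈ C.shapeArcs := by
    simp only [hC_def, Shape.shapeArcs, Set.mem_insert_iff, Set.mem_singleton_iff]
    tauto
  have hCarcs_cases : ∀ a ∈ C.shapeArcs, a = (p,x) ∨ a = (p,y) := by
    rintro a (rfl | ha)
    · exact Or.inl rfl
    · simp only [Set.mem_singleton_iff] at ha
      exact Or.inr ha
  -- a common fact : internal vertices of shapes-with-arcs-in-M are not leaves x,y nor p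
  have hint_not_leaf : ∀ S ∈ P', ∀ w ∈ S.internals, w ≠ x ∧ w ≠ y ∧ w ≠ p := by
    intro S hS w hw
    obtain ⟨a, haS, h1⟩ := internal_has_tail_arc hw
    have haM : a ∈ M.arcs := (hcov.1 S hS).1 haS
    exact ⟨h1 ▸ (hleaf_no_out_M a haM).1, h1 ▸ (hleaf_no_out_M a haM).2,
      h1 ▸ hp_no_out_M a haM⟩
  rcases eq_or_ne gp N.root with hgproot | hgproot
  · -- gp is the root : just add the new cherry shape
    refine ⟨insert C P', ⟨?_, ?_, ?_⟩, ?_⟩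
    · rintro S (rfl | hS)
      · exact ⟨hCarcsN, hxy⟩
      · refine ⟨?_, hvalidN S hS⟩
        intro a ha
        have haM : a ∈ M.arcs := (hcov.1 S hS).1 ha
        refine hMsubN a haM ?_
        rintro rfl
        exact (hcov.2.2 S hS _ ha) (hroot_eq ▸ hgproot ▸ rfl)
    · intro a haN haroot
      by_cases ha1 : a = (p,x) ∨ a = (p,y)
      · refine ⟨C, ⟨Set.mem_insert _ _, ?_⟩, ?_⟩
        · rcases ha1 with rfl | rfl
          · exact hpxC
          · exact hpyC
        · rintro S ⟨hS, haS⟩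
          rcases hS with rfl | hS
          · rfl
          · exfalso
            have haM : a ∈ M.arcs := (hcov.1 S hS).1 haS
            rcases ha1 with rfl | rfl
            · exact hnotM_px haM
            · exact hnotM_py haM
      · by_cases ha2 : a = (gp, p)
        · exact absurd (ha2 ▸ hgproot.symm ▸ rfl : a.1 = N.root) haroot
        · push_neg at ha1
          have haM : a ∈ M.arcs := (hM a).mpr (Or.inl ⟨haN, ha1.1, ha1.2, ha2⟩)
          have haroot' : a.1 ≠ M.root := by rw [hroot_eq]; exact haroot
          obtain ⟨Sa, ⟨hSaP, hSaarc⟩, huq⟩ := hcov.2.1 a haM haroot'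
          refine ⟨Sa, ⟨Set.mem_insert_of_mem _ hSaP, hSaarc⟩, ?_⟩
          rintro S ⟨hS, haS⟩
          rcases hS with rfl | hS
          · exfalso
            rcases hCarcs_cases a haS with rfl | rfl
            · exact ha1.1 rfl
            · exact ha1.2 rfl
          · exact huq S ⟨hS, haS⟩
    · rintro S (rfl | hS) a haS
      · rcases hCarcs_cases a haS with rfl | rfl
        · exact hproot
        · exact hproot
      · have haM : a ∈ M.arcs := (hcov.1 S hS).1 haS
        have := hcov.2.2 S hS a haS
        rwa [hroot_eq] at this
    · -- acyclicity
      refine aux_acyclic_transfer (C := C) (fun B => B) ?_ ?_ hacyc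
      · rintro B' ⟨-, hB'P, w, hint, hend⟩
        rcases hB'P with rfl | hB'P
        · obtain ⟨a, haS, h1⟩ := internal_has_tail_arc hint
          have hap : a.1 = p := by
            rcases hCarcs_cases a haS with rfl | rfl <;> rfl
          have hwp : w = p := h1.symm.trans hap
          rcases hend with rfl | hend
          · exact hxp hwp
          · simp only [Set.mem_singleton_iff] at hend
            subst hend
            exact hyp hwp
        · obtain ⟨h1, h2, h3⟩ := hint_not_leaf B' hB'P w hint
          rcases hend with rfl | hend
          · exact h1 rfl
          · simp only [Set.mem_singleton_iff] at hend
            exact h2 hend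
      · rintro B1 B2 ⟨h1P, h2P, w, hint, hend⟩ hB1 hB2
        rcases h1P with rfl | h1P
        · exact absurd rfl hB1
        · rcases h2P with rfl | h2P
          · exact absurd rfl hB2
          · exact ⟨h1P, h2P, w, hint, hend⟩
  · -- gp is not the root : modify the shape covering (gp, y)
    have hgpyM : ((gp, y) : V × V) ∈ M.arcs := (hM _).mpr (Or.inr rfl)
    obtain ⟨S', ⟨hS'P, hS'arc⟩, hS'uq⟩ := hcov.2.1 (gp, y) hgpyM
      (by rw [hroot_eq]; exact hgproot)
    -- construct the modified shape T
    have hS'sub := (hcov.1 S' hS'P).1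
    have hS'val := (hcov.1 S' hS'P).2
    have hTex : ∃ T : Shape V, T.IsValid N ∧
        T.shapeArcs = (S'.shapeArcs \ {(gp, y)}) ∪ {(gp, p)} ∧
        T.internals = S'.internals ∧
        (∀ w ∈ T.endpoints, w = p ∨ w ∈ S'.endpoints) := by
      cases S' with
      | cherry a b c =>
        have hvalbc : b ≠ c := hS'val
        rcases hS'arc with h | h
        · -- (gp,y) = (a,b)
          obtain ⟨rfl, rfl⟩ : gp = a ∧ y = b :=
            ⟨congrArg Prod.fst h, congrArg Prod.snd h⟩
          have hacM : ((gp, c) : V × V) ∈ M.arcs := hS'sub (by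
            simp only [Shape.shapeArcs, Set.mem_insert_iff, Set.mem_singleton_iff]; tauto)
          refine ⟨Shape.cherry gp p c, ?_, ?_, rfl, ?_⟩
          · intro hpc
            exact hnotM_gpp (by rw [hpc]; exact hacM)
          · ext z
            simp only [Shape.shapeArcs, Set.mem_union, Set.mem_diff, Set.mem_insert_iff,
              Set.mem_singleton_iff]
            constructor
            · rintro (rfl | rfl)
              · exact Or.inr rfl
              · exact Or.inl ⟨Or.inr rfl, fun hc => hvalbc (congrArg Prod.snd hc).symm⟩
            · rintro (⟨(rfl | rfl), hz⟩ | rfl)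
              · exact absurd rfl hz
              · exact Or.inr rfl
              · exact Or.inl rfl
          · rintro w (rfl | hw)
            · exact Or.inl rfl
            · simp only [Set.mem_singleton_iff] at hw
              subst hw
              exact Or.inr (by simp [Shape.endpoints])
        · -- (gp,y) = (a,c)
          simp only [Set.mem_singleton_iff] at h
          obtain ⟨rfl, rfl⟩ : gp = a ∧ y = c :=
            ⟨congrArg Prod.fst h, congrArg Prod.snd h⟩
          have habM : ((gp, b) : V × V) ∈ M.arcs := hS'sub (by
            simp only [Shape.shapeArcs, Set.mem_insert_iff, Set.mem_singleton_iff]; tauto)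
          refine ⟨Shape.cherry gp b p, ?_, ?_, rfl, ?_⟩
          · intro hbp
            exact hnotM_gpp (by rw [← hbp]; exact habM)
          · ext z
            simp only [Shape.shapeArcs, Set.mem_union, Set.mem_diff, Set.mem_insert_iff,
              Set.mem_singleton_iff]
            constructor
            · rintro (rfl | rfl)
              · exact Or.inl ⟨Or.inl rfl, fun hc => hvalbc (congrArg Prod.snd hc)⟩
              · exact Or.inr rfl
            · rintro (⟨(rfl | rfl), hz⟩ | rfl)
              · exact Or.inl rfl
              · exact absurd rfl hz
              · exact Or.inr rfl
          · rintro w (rfl | hw)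
            · exact Or.inr (by simp [Shape.endpoints])
            · simp only [Set.mem_singleton_iff] at hw
              subst hw
              exact Or.inl rfl
      | retic px' py' x' y'' =>
        obtain ⟨hretM, h1, h2, h3⟩ := hS'val
        rcases hS'arc with h | h | h
        · -- (gp,y) = (px',x')
          obtain ⟨rfl, rfl⟩ : gp = px' ∧ y = x' :=
            ⟨congrArg Prod.fst h, congrArg Prod.snd h⟩
          have hpy'' : ((py', y'') : V × V) ∈ M.arcs := hS'sub
            (retic_mem_shapeArcs gp py' y y'').2.1
          refine ⟨Shape.retic gp py' p y'', ⟨cherryRed_retic hN hred' hretM, h1, h2, ?_⟩,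
            ?_, rfl, ?_⟩
          · intro hpy''eq
            exact hp_no_in_M _ hpy'' hpy''eq.symm
          · ext z
            simp only [Shape.shapeArcs, Set.mem_union, Set.mem_diff, Set.mem_insert_iff,
              Set.mem_singleton_iff]
            constructor
            · rintro (rfl | rfl | rfl)
              · exact Or.inr rfl
              · exact Or.inl ⟨Or.inr (Or.inl rfl),
                  fun hc => hgpy (congrArg Prod.snd hc)⟩
              · exact Or.inl ⟨Or.inr (Or.inr rfl),
                  fun hc => h1 (congrArg Prod.fst hc).symm⟩
            · rintro (⟨(rfl | rfl | rfl), hz⟩ | rfl)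
              · exact absurd rfl hz
              · exact Or.inr (Or.inl rfl)
              · exact Or.inr (Or.inr rfl)
              · exact Or.inl rfl
          · rintro w (rfl | hw)
            · exact Or.inl rfl
            · simp only [Set.mem_singleton_iff] at hw
              subst hw
              exact Or.inr (by simp [Shape.endpoints])
        · -- (gp,y) = (py',px') : impossible, y would be a reticulation of M
          exfalso
          have : px' = y := (congrArg Prod.snd h).symm
          rw [this] at hretM
          rw [hretM.2.1] at hinM_y
          omega
        · -- (gp,y) = (py',y'')
          simp only [Set.mem_singleton_iff] at h
          obtain ⟨rfl, rfl⟩ : gp = py' ∧ y = y'' :=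
            ⟨congrArg Prod.fst h, congrArg Prod.snd h⟩
          have hpxx'M : ((px', x') : V × V) ∈ M.arcs := hS'sub
            (retic_mem_shapeArcs px' gp x' y).2.2
          have hpx'y : px' ≠ y := by
            intro hc
            rw [hc] at hretM
            rw [hretM.2.1] at hinM_y
            omega
          have hpx'vert : px' ∈ M.verts := hretM.1
          have hpx'p : px' ≠ p := by
            intro hc
            rw [hverts] at hpx'vert
            exact hpx'vert.2 (by simp [hc])
          refine ⟨Shape.retic px' gp x' p, ⟨cherryRed_retic hN hred' hretM, h1, hpx'p, ?_⟩,
            ?_, rfl, ?_⟩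
          · intro hc
            exact hp_no_in_M _ hpxx'M hc
          · ext z
            simp only [Shape.shapeArcs, Set.mem_union, Set.mem_diff, Set.mem_insert_iff,
              Set.mem_singleton_iff]
            constructor
            · rintro (rfl | rfl | rfl)
              · exact Or.inl ⟨Or.inl rfl, fun hc => h1 (congrArg Prod.fst hc)⟩
              · exact Or.inl ⟨Or.inr (Or.inl rfl),
                  fun hc => hpx'y (congrArg Prod.snd hc)⟩
              · exact Or.inr rfl
            · rintro (⟨(rfl | rfl | rfl), hz⟩ | rfl)
              · exact Or.inl rfl
              · exact Or.inr (Or.inl rfl)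
              · exact absurd rfl hz
              · exact Or.inr (Or.inr rfl)
          · rintro w (rfl | hw)
            · exact Or.inr (by simp [Shape.endpoints])
            · simp only [Set.mem_singleton_iff] at hw
              subst hw
              exact Or.inl rfl
    obtain ⟨T, hTval, hTarcs, hTint, hTend⟩ := hTex
    have hgpP_T : ((gp, p) : V × V) ∈ T.shapeArcs := by
      rw [hTarcs]; exact Or.inr rfl
    have hTsubN : T.shapeArcs ⊆ N.arcs := by
      intro a ha
      rw [hTarcs] at ha
      rcases ha with ⟨haS', hne⟩ | ha
      · exact hMsubN a (hS'sub haS') (by simpa using hne)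
      · simp only [Set.mem_singleton_iff] at ha
        subst ha
        exact hgp
    have hTnotP' : T ∉ P' := fun h => hnotM_gpp ((hcov.1 T h).1 hgpP_T)
    have hTneC : T ≠ C := by
      intro h
      rw [h] at hgpP_T
      rcases hCarcs_cases _ hgpP_T with hh | hh
      · exact hpgp (congrArg Prod.fst hh).symm
      · exact hpgp (congrArg Prod.fst hh).symm
    refine ⟨insert T (insert C (P' \ {S'})), ⟨?_, ?_, ?_⟩, ?_⟩
    · -- validity
      intro S hS
      rcases hS with rfl | hS
      · exact ⟨hTsubN, hTval⟩
      rcases hS with rfl | ⟨hSP', hSne⟩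
      · exact ⟨hCarcsN, hxy⟩
      · simp only [Set.mem_singleton_iff] at hSne
        refine ⟨?_, hvalidN S hSP'⟩
        intro a ha
        have haM : a ∈ M.arcs := (hcov.1 S hSP').1 ha
        refine hMsubN a haM ?_
        rintro rfl
        exact hSne (hS'uq S ⟨hSP', ha⟩)
    · -- exact covering
      intro a haN haroot
      by_cases ha1 : a = (p,x) ∨ a = (p,y)
      · refine ⟨C, ⟨Set.mem_insert_of_mem _ (Set.mem_insert _ _), ?_⟩, ?_⟩
        · rcases ha1 with rfl | rfl
          · exact hpxC
          · exact hpyC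
        · rintro S ⟨hS, haS⟩
          rcases hS with rfl | hS
          · exfalso
            rw [hTarcs] at haS
            rcases haS with ⟨haS', -⟩ | haS
            · have haM := hS'sub haS'
              rcases ha1 with rfl | rfl
              · exact hnotM_px haM
              · exact hnotM_py haM
            · simp only [Set.mem_singleton_iff] at haS
              rcases ha1 with rfl | rfl
              · exact hpgp (congrArg Prod.fst haS)
              · exact hpgp (congrArg Prod.fst haS)
          rcases hS with rfl | ⟨hSP', -⟩
          · rfl
          · exfalso
            have haM := (hcov.1 S hSP').1 haS
            rcases ha1 with rfl | rfl
            · exact hnotM_px haM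
            · exact hnotM_py haM
      · by_cases ha2 : a = (gp, p)
        · subst ha2
          refine ⟨T, ⟨Set.mem_insert _ _, hgpP_T⟩, ?_⟩
          rintro S ⟨hS, haS⟩
          rcases hS with rfl | hS
          · rfl
          rcases hS with rfl | ⟨hSP', -⟩
          · exfalso
            rcases hCarcs_cases _ haS with hh | hh
            · exact hpgp (congrArg Prod.fst hh).symm
            · exact hpgp (congrArg Prod.fst hh).symm
          · exact absurd ((hcov.1 S hSP').1 haS) hnotM_gpp
        · push_neg at ha1
          have haM : a ∈ M.arcs := (hM a).mpr (Or.inl ⟨haN, ha1.1, ha1.2, ha2⟩)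
          have haroot' : a.1 ≠ M.root := by rw [hroot_eq]; exact haroot
          obtain ⟨Sa, ⟨hSaP, hSaarc⟩, huq⟩ := hcov.2.1 a haM haroot'
          by_cases hSaS' : Sa = S'
          · subst hSaS'
            refine ⟨T, ⟨Set.mem_insert _ _, ?_⟩, ?_⟩
            · rw [hTarcs]
              refine Or.inl ⟨hSaarc, ?_⟩
              simp only [Set.mem_singleton_iff]
              rintro rfl
              exact hgpy_not haN
            · rintro S ⟨hS, haS⟩
              rcases hS with rfl | hS
              · rfl
              rcases hS with rfl | ⟨hSP', hSne⟩
              · exfalso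
                rcases hCarcs_cases _ haS with rfl | rfl
                · exact ha1.1 rfl
                · exact ha1.2 rfl
              · exfalso
                simp only [Set.mem_singleton_iff] at hSne
                exact hSne (huq S ⟨hSP', haS⟩)
          · refine ⟨Sa, ⟨Set.mem_insert_of_mem _ (Set.mem_insert_of_mem _
              ⟨hSaP, by simpa using hSaS'⟩), hSaarc⟩, ?_⟩
            rintro S ⟨hS, haS⟩
            rcases hS with rfl | hS
            · exfalso
              rw [hTarcs] at haS
              rcases haS with ⟨haS', -⟩ | haS
              · exact hSaS' ((huq S' ⟨hS'P, haS'⟩).symm ▸ rfl : Sa = S')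
              · simp only [Set.mem_singleton_iff] at haS
                exact ha2 haS
            rcases hS with rfl | ⟨hSP', -⟩
            · exfalso
              rcases hCarcs_cases _ haS with rfl | rfl
              · exact ha1.1 rfl
              · exact ha1.2 rfl
            · exact huq S ⟨hSP', haS⟩
    · -- no root arcs in shapes
      intro S hS a haS
      rcases hS with rfl | hS
      · rw [hTarcs] at haS
        rcases haS with ⟨haS', -⟩ | haS
        · have := hcov.2.2 S' hS'P a haS'
          rwa [hroot_eq] at this
        · simp only [Set.mem_singleton_iff] at haS
          subst haS
          exact hgproot
      rcases hS with rfl | ⟨hSP', -⟩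
      · rcases hCarcs_cases _ haS with rfl | rfl
        · exact hproot
        · exact hproot
      · have := hcov.2.2 S hSP' a haS
        rwa [hroot_eq] at this
    · -- acyclicity
      refine aux_acyclic_transfer (C := C) (fun B => if B = T then S' else B) ?_ ?_ hacyc
      · rintro B' ⟨-, hB'P, w, hint, hend⟩
        have hwxy : w = x ∨ w = y := by
          rcases hend with rfl | hend
          · exact Or.inl rfl
          · simp only [Set.mem_singleton_iff] at hend
            exact Or.inr hend
        rcases hB'P with rfl | hB'P
        · rw [hTint] at hint
          obtain ⟨h1, h2, -⟩ := hint_not_leaf S' hS'P w hint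
          rcases hwxy with rfl | rfl
          · exact h1 rfl
          · exact h2 rfl
        rcases hB'P with rfl | ⟨hB'P', -⟩
        · have hwp : w = p := hint
          rcases hwxy with rfl | rfl
          · exact hxp hwp
          · exact hyp hwp
        · obtain ⟨h1, h2, -⟩ := hint_not_leaf B' hB'P' w hint
          rcases hwxy with rfl | rfl
          · exact h1 rfl
          · exact h2 rfl
      · rintro B1 B2 ⟨h1P, h2P, w, hint, hend⟩ hB1ne hB2ne
        -- w is not p
        have hwnp : w ≠ p := by
          rintro rfl
          rcases h2P with rfl | h2P
          · rw [hTint] at hint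
            exact (hint_not_leaf S' hS'P _ hint).2.2 rfl
          rcases h2P with rfl | ⟨hB2P', -⟩
          · exact absurd rfl hB2ne
          · exact (hint_not_leaf B2 hB2P' _ hint).2.2 rfl
        have hφ2 : (if B2 = T then S' else B2) ∈ P' ∧
            w ∈ (if B2 = T then S' else B2).internals := by
          by_cases h : B2 = T
          · subst h
            simp only [if_pos rfl]
            exact ⟨hS'P, hTint ▸ hint⟩
          · simp only [if_neg h]
            rcases h2P with rfl | h2P
            · exact absurd rfl h
            rcases h2P with rfl | ⟨hB2P', -⟩
            · exact absurd rfl hB2ne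
            · exact ⟨hB2P', hint⟩
        have hφ1 : (if B1 = T then S' else B1) ∈ P' ∧
            w ∈ (if B1 = T then S' else B1).endpoints := by
          by_cases h : B1 = T
          · subst h
            simp only [if_pos rfl]
            rcases hTend w hend with rfl | hw
            · exact absurd rfl hwnp
            · exact ⟨hS'P, hw⟩
          · simp only [if_neg h]
            rcases h1P with rfl | h1P
            · exact absurd rfl h
            rcases h1P with rfl | ⟨hB1P', -⟩
            · exact absurd rfl hB1ne
            · exact ⟨hB1P', hend⟩
        exact ⟨hφ1.1, hφ2.1, w, hφ2.2, hφ1.2⟩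
end CherryCoverMain
section ReticTransfer
open Net Shape
variable {V : Type*} {N M : Net V}

/-- Reticulations of the reduced network are reticulations of the original
network (reticulation cherry reduction). -/
lemma reticRed_retic (hN : N.IsPhylo) (hred : N.ReticCherryRed M) {v : V}
    (hv : M.IsReticV v) : N.IsReticV v := by
  obtain ⟨x, y, px, py, qx, qy, hxy, hlx, hly, hpxx, hpypx, hpyy, hpx2, hqxpx, hqxpy,
    hqypy, hroot_eq, hverts, harcs⟩ := hred
  have hM : ∀ a : V × V, a ∈ M.arcs ↔
      ((a ∈ N.arcs ∧ a ≠ (py,px) ∧ a ≠ (qx,px) ∧ a ≠ (px,x) ∧ a ≠ (qy,py) ∧ a ≠ (py,y))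
        ∨ a = (qx,x) ∨ a = (qy,y)) := by
    intro a
    rw [harcs]
    simp only [Set.mem_union, Set.mem_diff, Set.mem_insert_iff, Set.mem_singleton_iff]
    tauto
  have hpxy : px ≠ y := fun hc => no_out_of_outdeg_zero hN hly.2.2 hpxx hc
  have hpyx' : ((py,px) : V × V) ≠ (py,y) := fun hc => hpxy (congrArg Prod.snd hc)
  have hpytree : N.IsTreeV py := tree_of_two_out hN hpypx hpyy hpyx' rfl
  have hpxret : N.IsReticV px :=
    retic_of_indeg_two hN (mem_verts_of_arc₂ hN hpypx) hpx2
  have hpypx' : py ≠ px := fun hc => no_self_loop hN (hc ▸ hpypx)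
  have hqxpx' : qx ≠ px := fun hc => no_self_loop hN (hc ▸ hqxpx)
  have hqypy' : qy ≠ py := fun hc => no_self_loop hN (hc ▸ hqypy)
  have hout_px : ∀ a ∈ N.arcs, a.1 = px → a = (px, x) := by
    intro a ha h1
    by_contra hc
    exact not_two_out_of_outdeg_one hN hpxret.2.2 ha hpxx hc h1 rfl
  have hpxqy : px ≠ qy := by
    intro hc
    have := hout_px (px, py) (by rw [hc]; exact hqypy) rfl
    have hpyx : py = x := congrArg Prod.snd this
    exact no_out_of_outdeg_zero hN (hpyx ▸ hlx.2.2) hpyy rfl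
  have hqxx_not : (qx, x) ∉ N.arcs := fun hc =>
    not_two_in_of_indeg_one hN hlx.2.1 hc hpxx
      (fun hc' => hqxpx' (congrArg Prod.fst hc')) rfl rfl
  have hqyy_not : (qy, y) ∉ N.arcs := fun hc =>
    not_two_in_of_indeg_one hN hly.2.1 hc hpyy
      (fun hc' => hqypy' (congrArg Prod.fst hc')) rfl rfl
  have hin_x : ∀ a ∈ N.arcs, a.2 = x → a = (px, x) := by
    intro a ha h2
    by_contra hc
    exact not_two_in_of_indeg_one hN hlx.2.1 ha hpxx hc h2 rfl
  have hin_y : ∀ a ∈ N.arcs, a.2 = y → a = (py, y) := by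
    intro a ha h2
    by_contra hc
    exact not_two_in_of_indeg_one hN hly.2.1 ha hpyy hc h2 rfl
  obtain ⟨hvM, hvin, hvout⟩ := hv
  rw [hverts] at hvM
  obtain ⟨hvN, hv2⟩ := hvM
  simp only [Set.mem_insert_iff, Set.mem_singleton_iff, not_or] at hv2
  obtain ⟨hvpx, hvpy⟩ := hv2
  have hvx : v ≠ x := by
    rintro rfl
    have : {a ∈ M.arcs | a.2 = v} = {((qx, v) : V × V)} := by
      ext a
      simp only [Set.mem_setOf_eq, Set.mem_singleton_iff, hM]
      constructor
      · rintro ⟨(⟨haN, h1, h2, h3, h4, h5⟩ | rfl | rfl), hh⟩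
        · exact absurd (hin_x a haN hh) h3
        · rfl
        · exact absurd hh.symm hxy
      · rintro rfl
        exact ⟨Or.inr (Or.inl rfl), rfl⟩
    unfold Net.indeg at hvin
    rw [this, Set.ncard_singleton] at hvin
    omega
  have hvy : v ≠ y := by
    rintro rfl
    have : {a ∈ M.arcs | a.2 = v} = {((qy, v) : V × V)} := by
      ext a
      simp only [Set.mem_setOf_eq, Set.mem_singleton_iff, hM]
      constructor
      · rintro ⟨(⟨haN, h1, h2, h3, h4, h5⟩ | rfl | rfl), hh⟩
        · exact absurd (hin_y a haN hh) h5
        · exact absurd hh hxy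
        · rfl
      · rintro rfl
        exact ⟨Or.inr (Or.inr rfl), rfl⟩
    unfold Net.indeg at hvin
    rw [this, Set.ncard_singleton] at hvin
    omega
  have hin : N.indeg v = M.indeg v := by
    unfold Net.indeg
    congr 1
    ext a
    simp only [Set.mem_setOf_eq, hM]
    constructor
    · rintro ⟨haN, hh⟩
      refine ⟨Or.inl ⟨haN, ?_, ?_, ?_, ?_, ?_⟩, hh⟩ <;> rintro rfl
      · exact hvpx hh.symm
      · exact hvpx hh.symm
      · exact hvx hh.symm
      · exact hvpy hh.symm
      · exact hvy hh.symm
    · rintro ⟨(⟨haN, -⟩ | rfl | rfl), hh⟩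
      · exact ⟨haN, hh⟩
      · exact absurd hh.symm hvx
      · exact absurd hh.symm hvy
  have hout : N.outdeg v = M.outdeg v := by
    rcases eq_or_ne v qx with rfl | hvqx
    · -- same computation as in reticRed_phylo
      rcases eq_or_ne v qy with rfl | hqq
      · have hpp : ((v, px) : V × V) ≠ (v, py) := fun hc => hpypx' (congrArg Prod.snd hc).symm
        have houtN : {a ∈ N.arcs | a.1 = v} = {((v,px) : V × V), (v,py)} := by
          ext a
          simp only [Set.mem_setOf_eq, Set.mem_insert_iff, Set.mem_singleton_iff]
          constructor
          · rintro ⟨haN, hh⟩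
            exact out_arc_cases hN hqxpx hqypy haN hpp rfl rfl hh
          · rintro (rfl | rfl)
            · exact ⟨hqxpx, rfl⟩
            · exact ⟨hqypy, rfl⟩
        have houtM : {a ∈ M.arcs | a.1 = v} = {((v,x) : V × V), (v,y)} := by
          ext a
          simp only [Set.mem_setOf_eq, Set.mem_insert_iff, Set.mem_singleton_iff, hM]
          constructor
          · rintro ⟨(⟨haN, h1, h2, h3, h4, h5⟩ | rfl | rfl), hh⟩
            · exfalso
              rcases out_arc_cases hN hqxpx hqypy haN hpp rfl rfl hh with rfl | rfl
              · exact h2 rfl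
              · exact h4 rfl
            · exact Or.inl rfl
            · exact Or.inr rfl
          · rintro (rfl | rfl)
            · exact ⟨Or.inr (Or.inl rfl), rfl⟩
            · exact ⟨Or.inr (Or.inr rfl), rfl⟩
        unfold Net.outdeg
        rw [houtN, houtM, Set.ncard_pair hpp,
          Set.ncard_pair (fun hc => hxy (congrArg Prod.snd hc))]
      · have hset : {a ∈ M.arcs | a.1 = v} =
            insert ((v, x) : V × V) ({a ∈ N.arcs | a.1 = v} \ {(v, px)}) := by
          ext a
          simp only [Set.mem_setOf_eq, Set.mem_insert_iff, Set.mem_diff,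
            Set.mem_singleton_iff, hM]
          constructor
          · rintro ⟨(⟨haN, h1, h2, h3, h4, h5⟩ | rfl | rfl), hh⟩
            · exact Or.inr ⟨⟨haN, hh⟩, h2⟩
            · exact Or.inl rfl
            · exact absurd hh.symm hqq
          · rintro (rfl | ⟨⟨haN, h1⟩, h2⟩)
            · exact ⟨Or.inr (Or.inl rfl), rfl⟩
            · refine ⟨Or.inl ⟨haN, ?_, ?_, ?_, ?_, ?_⟩, h1⟩ <;> rintro rfl
              · exact hqxpy h1.symm
              · exact h2 rfl
              · exact hqxpx' h1.symm
              · exact hqq h1.symm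
              · exact hqxpy h1.symm
        have hmemN : ((v, px) : V × V) ∈ {a ∈ N.arcs | a.1 = v} := ⟨hqxpx, rfl⟩
        have hfin : {a ∈ N.arcs | a.1 = v}.Finite := outSet_fin hN v
        have hpos : 0 < {a ∈ N.arcs | a.1 = v}.ncard := (Set.ncard_pos hfin).mpr ⟨_, hmemN⟩
        have hnm : ((v, x) : V × V) ∉ {a ∈ N.arcs | a.1 = v} \ {(v, px)} := by
          rintro ⟨⟨hc, -⟩, -⟩
          exact hqxx_not hc
        unfold Net.outdeg
        rw [hset, Set.ncard_insert_of_notMem hnm hfin.diff,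
          Set.ncard_diff_singleton_of_mem hmemN]
        omega
    · rcases eq_or_ne v qy with rfl | hvqy
      · have hset : {a ∈ M.arcs | a.1 = v} =
            insert ((v, y) : V × V) ({a ∈ N.arcs | a.1 = v} \ {(v, py)}) := by
          ext a
          simp only [Set.mem_setOf_eq, Set.mem_insert_iff, Set.mem_diff,
            Set.mem_singleton_iff, hM]
          constructor
          · rintro ⟨(⟨haN, h1, h2, h3, h4, h5⟩ | rfl | rfl), hh⟩
            · exact Or.inr ⟨⟨haN, hh⟩, h4⟩
            · exact absurd hh.symm hvqx
            · exact Or.inl rfl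
          · rintro (rfl | ⟨⟨haN, h1⟩, h2⟩)
            · exact ⟨Or.inr (Or.inr rfl), rfl⟩
            · refine ⟨Or.inl ⟨haN, ?_, ?_, ?_, ?_, ?_⟩, h1⟩ <;> rintro rfl
              · exact hqypy' h1.symm
              · exact hvqx h1.symm
              · exact hpxqy h1
              · exact h2 rfl
              · exact hqypy' h1.symm
        have hmemN : ((v, py) : V × V) ∈ {a ∈ N.arcs | a.1 = v} := ⟨hqypy, rfl⟩
        have hfin : {a ∈ N.arcs | a.1 = v}.Finite := outSet_fin hN v
        have hpos : 0 < {a ∈ N.arcs | a.1 = v}.ncard := (Set.ncard_pos hfin).mpr ⟨_, hmemN⟩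
        have hnm : ((v, y) : V × V) ∉ {a ∈ N.arcs | a.1 = v} \ {(v, py)} := by
          rintro ⟨⟨hc, -⟩, -⟩
          exact hqyy_not hc
        unfold Net.outdeg
        rw [hset, Set.ncard_insert_of_notMem hnm hfin.diff,
          Set.ncard_diff_singleton_of_mem hmemN]
        omega
      · unfold Net.outdeg
        congr 1
        ext a
        simp only [Set.mem_setOf_eq, hM]
        constructor
        · rintro ⟨haN, hh⟩
          refine ⟨Or.inl ⟨haN, ?_, ?_, ?_, ?_, ?_⟩, hh⟩ <;> rintro rfl
          · exact hvpy hh.symm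
          · exact hvqx hh.symm
          · exact hvpx hh.symm
          · exact hvqy hh.symm
          · exact hvpy hh.symm
        · rintro ⟨(⟨haN, -⟩ | rfl | rfl), hh⟩
          · exact ⟨haN, hh⟩
          · exact absurd hh.symm hvqx
          · exact absurd hh.symm hvqy
  exact ⟨hvN, hin.trans hvin, hout.trans hvout⟩
end ReticTransfer
/-- Apply a vertex substitution to the endpoint slots of a shape. -/
def shapeEndMap {V : Type*} (σ : V → V) : Shape V → Shape V
  | .cherry p a b => .cherry p (σ a) (σ b)
  | .retic px py a b => .retic px py (σ a) (σ b)

section ReticCoverMain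
open Net Shape
variable {V : Type*} {N M : Net V}

lemma shapeEndMap_internals (σ : V → V) (S : Shape V) :
    (shapeEndMap σ S).internals = S.internals := by
  cases S <;> rfl

lemma shapeEndMap_endpoints (σ : V → V) (S : Shape V) :
    (shapeEndMap σ S).endpoints = σ '' S.endpoints := by
  cases S <;> simp [shapeEndMap, Shape.endpoints, Set.image_insert_eq]

lemma shapeEndMap_arcs (σ : V → V) (S : Shape V)
    (hfix : ∀ v ∈ S.internals, σ v = v) :
    (shapeEndMap σ S).shapeArcs = (fun a : V × V => (a.1, σ a.2)) '' S.shapeArcs := by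
  cases S with
  | cherry p a b =>
    simp [shapeEndMap, Shape.shapeArcs, Set.image_insert_eq]
  | retic px py a b =>
    have h1 : σ px = px := hfix px (Set.mem_insert _ _)
    simp [shapeEndMap, Shape.shapeArcs, Set.image_insert_eq, h1]

lemma reticRed_cover (hN : N.IsPhylo) (hred : N.ReticCherryRed M) {P' : Set (Shape V)}
    (hcov : M.IsCherryCover P') (hacyc : Net.AuxAcyclic P') :
    ∃ P : Set (Shape V), N.IsCherryCover P ∧ Net.AuxAcyclic P := by
  classical
  have hred' := hred
  obtain ⟨x, y, px, py, qx, qy, hxy, hlx, hly, hpxx, hpypx, hpyy, hpx2, hqxpx, hqxpy,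
    hqypy, hroot_eq, hverts, harcs⟩ := hred
  have hM : ∀ a : V × V, a ∈ M.arcs ↔
      ((a ∈ N.arcs ∧ a ≠ (py,px) ∧ a ≠ (qx,px) ∧ a ≠ (px,x) ∧ a ≠ (qy,py) ∧ a ≠ (py,y))
        ∨ a = (qx,x) ∨ a = (qy,y)) := by
    intro a
    rw [harcs]
    simp only [Set.mem_union, Set.mem_diff, Set.mem_insert_iff, Set.mem_singleton_iff]
    tauto
  have hpxy : px ≠ y := fun hc => no_out_of_outdeg_zero hN hly.2.2 hpxx hc
  have hpyx' : ((py,px) : V × V) ≠ (py,y) := fun hc => hpxy (congrArg Prod.snd hc)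
  have hpytree : N.IsTreeV py := tree_of_two_out hN hpypx hpyy hpyx' rfl
  have hpxret : N.IsReticV px :=
    retic_of_indeg_two hN (mem_verts_of_arc₂ hN hpypx) hpx2
  have hpxx' : px ≠ x := fun hc => no_self_loop hN (hc ▸ hpxx)
  have hpypx' : py ≠ px := fun hc => no_self_loop hN (hc ▸ hpypx)
  have hpyy' : py ≠ y := fun hc => no_self_loop hN (hc ▸ hpyy)
  have hqxpx' : qx ≠ px := fun hc => no_self_loop hN (hc ▸ hqxpx)
  have hqypy' : qy ≠ py := fun hc => no_self_loop hN (hc ▸ hqypy)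
  have hout_px : ∀ a ∈ N.arcs, a.1 = px → a = (px, x) := by
    intro a ha h1
    by_contra hc
    exact not_two_out_of_outdeg_one hN hpxret.2.2 ha hpxx hc h1 rfl
  have hout_py : ∀ a ∈ N.arcs, a.1 = py → a = (py, px) ∨ a = (py, y) :=
    fun a ha h1 => out_arc_cases hN hpypx hpyy ha hpyx' rfl rfl h1
  have hpxqy : px ≠ qy := by
    intro hc
    have := hout_px (px, py) (by rw [hc]; exact hqypy) rfl
    have hpyx : py = x := congrArg Prod.snd this
    exact no_out_of_outdeg_zero hN (hpyx ▸ hlx.2.2) hpyy rfl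
  have hpyx'' : py ≠ x := fun hc => no_out_of_outdeg_zero hN (hc ▸ hlx.2.2) hpyy rfl
  have hqxx : qx ≠ x := fun hc => no_out_of_outdeg_zero hN hlx.2.2 hqxpx hc
  have hqyx : qy ≠ x := fun hc => no_out_of_outdeg_zero hN hlx.2.2 hqypy hc
  have hqxy : qx ≠ y := fun hc => no_out_of_outdeg_zero hN hly.2.2 hqxpx hc
  have hqyy : qy ≠ y := fun hc => no_out_of_outdeg_zero hN hly.2.2 hqypy hc
  have hqppair : ((py, px) : V × V) ≠ (qx, px) := fun hc =>
    hqxpy (congrArg Prod.fst hc).symm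
  have hin_px : ∀ a ∈ N.arcs, a.2 = px → a = (py, px) ∨ a = (qx, px) :=
    fun a ha h2 => in_arc_cases hN hpypx hqxpx ha hqppair rfl rfl h2
  have hin_py : ∀ a ∈ N.arcs, a.2 = py → a = (qy, py) := by
    intro a ha h2
    by_contra hc
    exact not_two_in_of_indeg_one hN hpytree.2.1 ha hqypy hc h2 rfl
  have hin_x : ∀ a ∈ N.arcs, a.2 = x → a = (px, x) := by
    intro a ha h2
    by_contra hc
    exact not_two_in_of_indeg_one hN hlx.2.1 ha hpxx hc h2 rfl
  have hin_y : ∀ a ∈ N.arcs, a.2 = y → a = (py, y) := by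
    intro a ha h2
    by_contra hc
    exact not_two_in_of_indeg_one hN hly.2.1 ha hpyy hc h2 rfl
  have hpxroot : px ≠ N.root := root_no_in hN hpypx
  have hpyroot : py ≠ N.root := root_no_in hN hqypy
  have hxroot : x ≠ N.root := root_no_in hN hpxx
  have hyroot : y ≠ N.root := root_no_in hN hpyy
  have hMsubN : ∀ a ∈ M.arcs, a ≠ (qx, x) → a ≠ (qy, y) → a ∈ N.arcs := by
    intro a ha h1 h2
    rw [hM] at ha
    rcases ha with ⟨haN, -⟩ | rfl | rfl
    · exact haN
    · exact absurd rfl h1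
    · exact absurd rfl h2
  have htails : ∀ a ∈ M.arcs, a.1 ≠ x ∧ a.1 ≠ y ∧ a.1 ≠ px ∧ a.1 ≠ py := by
    intro a ha
    rw [hM] at ha
    rcases ha with ⟨haN, h1, h2, h3, h4, h5⟩ | rfl | rfl
    · refine ⟨fun hc => no_out_of_outdeg_zero hN hlx.2.2 haN hc,
        fun hc => no_out_of_outdeg_zero hN hly.2.2 haN hc, ?_, ?_⟩
      · intro hc
        exact h3 (hout_px a haN hc)
      · intro hc
        rcases hout_py a haN hc with rfl | rfl
        · exact h1 rfl
        · exact h5 rfl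
    · exact ⟨hqxx, hqxy, hqxpx', hqxpy⟩
    · exact ⟨hqyx, hqyy, Ne.symm hpxqy, hqypy'⟩
  have hheads : ∀ a ∈ M.arcs, a.2 ≠ px ∧ a.2 ≠ py := by
    intro a ha
    rw [hM] at ha
    rcases ha with ⟨haN, h1, h2, h3, h4, h5⟩ | rfl | rfl
    · constructor
      · intro hc
        rcases hin_px a haN hc with rfl | rfl
        · exact h1 rfl
        · exact h2 rfl
      · intro hc
        exact h4 (hin_py a haN hc)
    · exact ⟨Ne.symm hpxx', Ne.symm hpyx''⟩
    · exact ⟨Ne.symm hpxy, Ne.symm hpyy'⟩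
  have hinM_x : ∀ a ∈ M.arcs, a.2 = x → a = (qx, x) := by
    intro a ha h2
    rw [hM] at ha
    rcases ha with ⟨haN, h1', h2', h3', -⟩ | rfl | rfl
    · exact absurd (hin_x a haN h2) h3'
    · rfl
    · exact absurd h2 hxy.symm
  have hinM_y : ∀ a ∈ M.arcs, a.2 = y → a = (qy, y) := by
    intro a ha h2
    rw [hM] at ha
    rcases ha with ⟨haN, h1', h2', h3', h4', h5'⟩ | rfl | rfl
    · exact absurd (hin_y a haN h2) h5'
    · exact absurd h2 hxy
    · rfl
  have hqxxM : ((qx, x) : V × V) ∈ M.arcs := (hM _).mpr (Or.inr (Or.inl rfl))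
  have hqyyM : ((qy, y) : V × V) ∈ M.arcs := (hM _).mpr (Or.inr (Or.inr rfl))
  -- the substitution
  set σ : V → V := fun v => if v = x then px else if v = y then py else v with hσdef
  have hσx : σ x = px := by rw [hσdef]; simp
  have hσy : σ y = py := by rw [hσdef]; simp [Ne.symm hxy]
  have hσo : ∀ v, v ≠ x → v ≠ y → σ v = v := by
    intro v h1 h2
    rw [hσdef]
    simp [h1, h2]
  have hσ_ne_x : ∀ v, σ v ≠ x := by
    intro v
    rcases eq_or_ne v x with rfl | h1
    · rw [hσx]; exact hpxx'
    · rcases eq_or_ne v y with rfl | h2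
      · rw [hσy]; exact hpyx''
      · rw [hσo v h1 h2]; exact h1
  have hσ_ne_y : ∀ v, σ v ≠ y := by
    intro v
    rcases eq_or_ne v x with rfl | h1
    · rw [hσx]; exact hpxy
    · rcases eq_or_ne v y with rfl | h2
      · rw [hσy]; exact hpyy'
      · rw [hσo v h1 h2]; exact h2
  -- σ is injective on heads of M-arcs
  have hheadinj : ∀ u w : V, (∃ b ∈ M.arcs, b.2 = u) → (∃ b ∈ M.arcs, b.2 = w) →
      σ u = σ w → u = w := by
    intro u w hu hw hσeq
    obtain ⟨bu, hbu, hbu2⟩ := hu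
    obtain ⟨bw, hbw, hbw2⟩ := hw
    by_cases h1 : u = x
    · by_cases h1' : w = x
      · rw [h1, h1']
      · by_cases h2' : w = y
        · rw [h1, hσx, h2', hσy] at hσeq
          exact absurd hσeq.symm hpypx'
        · rw [h1, hσx, hσo w h1' h2'] at hσeq
          exact absurd (hbw2.trans hσeq.symm) (hheads bw hbw).1
    · by_cases h2 : u = y
      · by_cases h1' : w = x
        · rw [h2, hσy, h1', hσx] at hσeq
          exact absurd hσeq hpypx'
        · by_cases h2' : w = y
          · rw [h2, h2']
          · rw [h2, hσy, hσo w h1' h2'] at hσeq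
            exact absurd (hbw2.trans hσeq.symm) (hheads bw hbw).2
      · rw [hσo u h1 h2] at hσeq
        by_cases h1' : w = x
        · rw [h1', hσx] at hσeq
          exact absurd (hbu2.trans hσeq) (hheads bu hbu).1
        · by_cases h2' : w = y
          · rw [h2', hσy] at hσeq
            exact absurd (hbu2.trans hσeq) (hheads bu hbu).2
          · rw [hσo w h1' h2'] at hσeq
            exact hσeq
  have hmap_inj : ∀ b ∈ M.arcs, ∀ b' ∈ M.arcs,
      (b.1, σ b.2) = (b'.1, σ b'.2) → b = b' := by
    intro b hb b' hb' heq
    have h1 := congrArg Prod.fst heq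
    have h2 : b.2 = b'.2 := hheadinj _ _ ⟨b, hb, rfl⟩ ⟨b', hb', rfl⟩ (congrArg Prod.snd heq)
    exact Prod.ext h1 h2
  have hmap_mem : ∀ b ∈ M.arcs, (b.1, σ b.2) ∈ N.arcs := by
    intro b hb
    rcases eq_or_ne b.2 x with h2 | h2
    · have := hinM_x b hb h2
      rw [this]
      simp only [hσx]
      exact hqxpx
    · rcases eq_or_ne b.2 y with h2' | h2'
      · have := hinM_y b hb h2'
        rw [this]
        simp only [hσy]
        exact hqypy
      · rw [hσo _ h2 h2', Prod.mk.eta]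
        refine hMsubN b hb ?_ ?_ <;> rintro rfl
        · exact h2 rfl
        · exact h2' rfl
  have hsurj : ∀ a ∈ N.arcs, a ≠ (px, x) → a ≠ (py, px) → a ≠ (py, y) →
      ∃ b ∈ M.arcs, (b.1, σ b.2) = a := by
    intro a haN h1 h2 h3
    by_cases hq1 : a = (qx, px)
    · exact ⟨(qx, x), hqxxM, by rw [hq1]; simp only [hσx]⟩
    · by_cases hq2 : a = (qy, py)
      · exact ⟨(qy, y), hqyyM, by rw [hq2]; simp only [hσy]⟩
      · refine ⟨a, (hM a).mpr (Or.inl ⟨haN, h2, hq1, h1, hq2, h3⟩), ?_⟩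
        have hax : a.2 ≠ x := by
          intro hc
          exact h1 (hin_x a haN hc)
        have hay : a.2 ≠ y := by
          intro hc
          exact h3 (hin_y a haN hc)
        rw [hσo _ hax hay, Prod.mk.eta]
  -- shape-level facts for shapes of P'
  have hint_M : ∀ S ∈ P', ∀ w ∈ S.internals, w ≠ x ∧ w ≠ y ∧ w ≠ px ∧ w ≠ py := by
    intro S hS w hw
    obtain ⟨a, haS, h1⟩ := internal_has_tail_arc hw
    have haM : a ∈ M.arcs := (hcov.1 S hS).1 haS
    exact h1 ▸ htails a haM
  have hfix : ∀ S ∈ P', ∀ w ∈ S.internals, σ w = w := by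
    intro S hS w hw
    obtain ⟨h1, h2, -⟩ := hint_M S hS w hw
    exact hσo w h1 h2
  have harcs_im : ∀ S ∈ P', (shapeEndMap σ S).shapeArcs =
      (fun a : V × V => (a.1, σ a.2)) '' S.shapeArcs :=
    fun S hS => shapeEndMap_arcs σ S (hfix S hS)
  have hvalid_im : ∀ S ∈ P', (shapeEndMap σ S).IsValid N := by
    intro S hS
    have hval := (hcov.1 S hS).2
    have hsub := (hcov.1 S hS).1
    cases S with
    | cherry p a b =>
      have ha : (p, a) ∈ M.arcs := hsub (Set.mem_insert _ _)
      have hb : (p, b) ∈ M.arcs := hsub (by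
        simp only [Shape.shapeArcs, Set.mem_insert_iff, Set.mem_singleton_iff]; tauto)
      intro hc
      exact hval (hheadinj a b ⟨_, ha, rfl⟩ ⟨_, hb, rfl⟩ hc)
    | retic px' py' a b =>
      obtain ⟨hret, h1, h2, h3⟩ := hval
      have hpa : (px', a) ∈ M.arcs := hsub (retic_mem_shapeArcs px' py' a b).2.2
      have hpb : (py', b) ∈ M.arcs := hsub (retic_mem_shapeArcs px' py' a b).2.1
      have hintpx : px' ∈ (Shape.retic px' py' a b).internals := Set.mem_insert _ _
      obtain ⟨-, -, hpx3, hpx4⟩ := hint_M _ hS px' hintpx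
      refine ⟨reticRed_retic hN hred' hret, h1, ?_, ?_⟩
      · rcases eq_or_ne b x with rfl | hb1
        · rw [hσx]; exact hpx3
        · rcases eq_or_ne b y with rfl | hb2
          · rw [hσy]; exact hpx4
          · rw [hσo b hb1 hb2]; exact h2
      · intro hc
        exact h3 (hheadinj a b ⟨_, hpa, rfl⟩ ⟨_, hpb, rfl⟩ hc)
  set R : Shape V := Shape.retic px py x y with hR_def
  have hRarcs : ∀ a ∈ R.shapeArcs, a = (px, x) ∨ a = (py, px) ∨ a = (py, y) := by
    rintro a (rfl | rfl | ha)
    · exact Or.inl rfl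
    · exact Or.inr (Or.inl rfl)
    · simp only [Set.mem_singleton_iff] at ha
      exact Or.inr (Or.inr ha)
  refine ⟨insert R ((shapeEndMap σ) '' P'), ⟨?_, ?_, ?_⟩, ?_⟩
  · rintro S (rfl | ⟨S₀, hS₀, rfl⟩)
    · constructor
      · rintro a ha
        rcases hRarcs a ha with rfl | rfl | rfl
        · exact hpxx
        · exact hpypx
        · exact hpyy
      · exact ⟨hpxret, Ne.symm hpypx', hpxy, hxy⟩
    · constructor
      · rw [harcs_im S₀ hS₀]
        rintro a ⟨b, hb, rfl⟩
        exact hmap_mem b ((hcov.1 S₀ hS₀).1 hb)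
      · exact hvalid_im S₀ hS₀
  · intro a haN haroot
    by_cases hR1 : a = (px, x) ∨ a = (py, px) ∨ a = (py, y)
    · refine ⟨R, ⟨Set.mem_insert _ _, ?_⟩, ?_⟩
      · rcases hR1 with rfl | rfl | rfl
        · exact (retic_mem_shapeArcs px py x y).2.2
        · exact (retic_mem_shapeArcs px py x y).1
        · exact (retic_mem_shapeArcs px py x y).2.1
      · rintro S ⟨hS, haS⟩
        rcases hS with rfl | ⟨S₀, hS₀, rfl⟩
        · rfl
        · exfalso
          rw [harcs_im S₀ hS₀] at haS
          obtain ⟨b, hbS₀, hbeq⟩ := haS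
          have hbM : b ∈ M.arcs := (hcov.1 S₀ hS₀).1 hbS₀
          rcases hR1 with rfl | rfl | rfl
          · exact hσ_ne_x b.2 (congrArg Prod.snd hbeq)
          · -- head px : b must be (qx,x), so a = (qx,px), but a = (py,px)
            have hb2 : σ b.2 = px := congrArg Prod.snd hbeq
            rcases eq_or_ne b.2 x with h2 | h2
            · have hbval := hinM_x b hbM h2
              rw [hbval] at hbeq
              simp only [hσx] at hbeq
              exact hqxpy (congrArg Prod.fst hbeq)
            · rcases eq_or_ne b.2 y with h2' | h2'
              · rw [h2', hσy] at hb2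
                exact hpypx' hb2
              · rw [hσo _ h2 h2'] at hb2
                exact (hheads b hbM).1 hb2
          · exact hσ_ne_y b.2 (congrArg Prod.snd hbeq)
    · push_neg at hR1
      obtain ⟨b, hbM, hbeq⟩ := hsurj a haN hR1.1 hR1.2.1 hR1.2.2
      have hbroot : b.1 ≠ M.root := by
        rw [hroot_eq]
        intro hc
        exact haroot ((congrArg Prod.fst hbeq).symm.trans hc)
      obtain ⟨Sb, ⟨hSbP, hSbarc⟩, huq⟩ := hcov.2.1 b hbM hbroot
      refine ⟨shapeEndMap σ Sb, ⟨Set.mem_insert_of_mem _ ⟨Sb, hSbP, rfl⟩, ?_⟩, ?_⟩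
      · rw [harcs_im Sb hSbP]
        exact ⟨b, hSbarc, hbeq⟩
      · rintro S ⟨hS, haS⟩
        rcases hS with rfl | ⟨S₀, hS₀, rfl⟩
        · exfalso
          rcases hRarcs a haS with rfl | rfl | rfl
          · exact hR1.1 rfl
          · exact hR1.2.1 rfl
          · exact hR1.2.2 rfl
        · rw [harcs_im S₀ hS₀] at haS
          obtain ⟨b', hb'S₀, hb'eq⟩ := haS
          have hb'M : b' ∈ M.arcs := (hcov.1 S₀ hS₀).1 hb'S₀
          have : b' = b := hmap_inj b' hb'M b hbM (hb'eq.trans hbeq.symm)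
          subst this
          rw [huq S₀ ⟨hS₀, hb'S₀⟩]
  · rintro S hS a haS
    rcases hS with rfl | ⟨S₀, hS₀, rfl⟩
    · rcases hRarcs a haS with rfl | rfl | rfl
      · exact hpxroot
      · exact hpyroot
      · exact hpyroot
    · rw [harcs_im S₀ hS₀] at haS
      obtain ⟨b, hbS₀, rfl⟩ := haS
      have := hcov.2.2 S₀ hS₀ b hbS₀
      rwa [hroot_eq] at this
  · -- acyclicity
    refine aux_acyclic_transfer (C := R)
      (fun B => if h : ∃ S₀, S₀ ∈ P' ∧ shapeEndMap σ S₀ = B then h.choose else B) ?_ ?_ hacyc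
    · rintro B' ⟨-, hB'P, w, hint, hend⟩
      have hwxy : w = x ∨ w = y := by
        rcases hend with rfl | hend
        · exact Or.inl rfl
        · simp only [Set.mem_singleton_iff] at hend
          exact Or.inr hend
      rcases hB'P with rfl | ⟨S₀, hS₀, rfl⟩
      · have hwpxy : w = px ∨ w = py := by
          rcases hint with rfl | hint
          · exact Or.inl rfl
          · simp only [Set.mem_singleton_iff] at hint
            exact Or.inr hint
        rcases hwxy with rfl | rfl <;> rcases hwpxy with rfl | rfl
        · exact hpxx' rfl
        · exact hpyx'' rfl
        · exact hpxy rfl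
        · exact hpyy' rfl
      · rw [shapeEndMap_internals] at hint
        obtain ⟨h1, h2, -⟩ := hint_M S₀ hS₀ w hint
        rcases hwxy with rfl | rfl
        · exact h1 rfl
        · exact h2 rfl
    · rintro B1 B2 ⟨h1P, h2P, w, hint, hend⟩ hB1ne hB2ne
      have hB1im : ∃ S₀, S₀ ∈ P' ∧ shapeEndMap σ S₀ = B1 := by
        rcases h1P with rfl | ⟨S₀, hS₀, rfl⟩
        · exact absurd rfl hB1ne
        · exact ⟨S₀, hS₀, rfl⟩
      have hB2im : ∃ S₀, S₀ ∈ P' ∧ shapeEndMap σ S₀ = B2 := by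
        rcases h2P with rfl | ⟨S₀, hS₀, rfl⟩
        · exact absurd rfl hB2ne
        · exact ⟨S₀, hS₀, rfl⟩
      simp only [dif_pos hB1im, dif_pos hB2im]
      obtain ⟨hc1P, hc1eq⟩ := hB1im.choose_spec
      obtain ⟨hc2P, hc2eq⟩ := hB2im.choose_spec
      have hint2 : w ∈ hB2im.choose.internals := by
        rw [← shapeEndMap_internals σ hB2im.choose, hc2eq]
        exact hint
      have hend1 : w ∈ hB1im.choose.endpoints := by
        have : w ∈ (shapeEndMap σ hB1im.choose).endpoints := by
          rw [hc1eq]; exact hend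
        rw [shapeEndMap_endpoints] at this
        obtain ⟨w', hw', hσw'⟩ := this
        obtain ⟨-, -, h3, h4⟩ := hint_M hB2im.choose hc2P w hint2
        rcases eq_or_ne w' x with rfl | hw1
        · rw [hσx] at hσw'
          exact absurd hσw'.symm h3
        · rcases eq_or_ne w' y with rfl | hw2
          · rw [hσy] at hσw'
            exact absurd hσw'.symm h4
          · rw [hσo w' hw1 hw2] at hσw'
            exact hσw' ▸ hw'
      exact ⟨hc1P, hc2P, w, hint2, hend1⟩
end ReticCoverMain
section OrchardPart
open Net Shape
variable {V : Type*}

/-- Orchard networks admit an acyclic cherry cover. -/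
lemma orchard_acyclic_cover (N : Net V) (hN : N.IsPhylo) (ho : N.IsOrchard) :
    ∃ P : Set (Shape V), N.IsCherryCover P ∧ Net.AuxAcyclic P := by
  obtain ⟨N'', hsteps, hsingle⟩ := ho
  revert hN
  induction hsteps using Relation.ReflTransGen.head_induction_on with
  | refl =>
    intro _
    exact ⟨∅, single_leaf_cover _ hsingle⟩
  | @head K K' hstep hrest ih =>
    intro hphy
    have hphy' : K'.IsPhylo := by
      rcases hstep with hc | hr
      · exact cherryRed_phylo hphy hc
      · exact reticRed_phylo hphy hr
    obtain ⟨P', hcov', hacyc'⟩ := ih hphy'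
    rcases hstep with hc | hr
    · exact cherryRed_cover hphy hc hcov' hacyc'
    · exact reticRed_cover hphy hr hcov' hacyc'
end OrchardPart
/-- If a tree-based network contains two N-fences of length at least 3 joined
by directed paths in the "crossing" pattern, then every cherry cover auxiliary
graph of `N` contains a directed cycle; in particular `N` is not orchard. -/
theorem crossing_nfences_not_orchard {V : Type*} (N : Net V) (hN : N.IsPhylo)
    (htb : ∃ P : Set (Shape V), N.IsCherryCover P)
    (lu lv : List (V × V))
    (hlu : Net.IsMaximalZigZag N.nonRootArcs lu)
    (hlv : Net.IsMaximalZigZag N.nonRootArcs lv)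
    (hNu : N.IsNFence lu) (hNv : N.IsNFence lv)
    (hlu3 : 3 ≤ lu.length) (hlv3 : 3 ≤ lv.length)
    (hfu : ∃ a : V × V, lu.head? = some a ∧ N.IsReticV a.1)
    (hfv : ∃ a : V × V, lv.head? = some a ∧ N.IsReticV a.1)
    (h i j k : ℕ)
    (hhe : Even h) (hie : Even i) (hje : Even j) (hke : Even k)
    (hk2 : 2 ≤ k) (hkh : k < h) (hh : h ≤ lu.length)
    (hi2 : 2 ≤ i) (hij : i < j) (hj : j ≤ lv.length)
    (hpath1 : Relation.ReflTransGen N.arcRel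
      (lu.get ⟨h - 1, by omega⟩).2 (lv.get ⟨i - 1, by omega⟩).1)
    (hpath2 : Relation.ReflTransGen N.arcRel
      (lv.get ⟨j - 1, by omega⟩).2 (lu.get ⟨k - 1, by omega⟩).1) :
    (∀ P : Set (Shape V), N.IsCherryCover P →
        ∃ B : Shape V, Relation.TransGen (Net.AuxRel P) B B) ∧
    ¬ N.IsOrchard := by
  constructor
  · intro P hP
    exact crossing_cycle N hN lu lv hlu.1 hlv.1 hNu.1 hNv.1 hlu3 hlv3 hfu hfv
      h i j k hhe hie hje hke hk2 hkh hh hi2 hij hj hpath1 hpath2 P hP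
  · intro horch
    obtain ⟨P, hP, hacyc⟩ := orchard_acyclic_cover N hN horch
    obtain ⟨B, hB⟩ := crossing_cycle N hN lu lv hlu.1 hlv.1 hNu.1 hNv.1 hlu3 hlv3 hfu hfv
      h i j k hhe hie hje hke hk2 hkh hh hi2 hij hj hpath1 hpath2 P hP
    exact hacyc B hB
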